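/- arXiv:2003.01818 — 6 statements merged into one kernel-verified Lean document; each statement's English description precedes it below -/
import Mathlib

section
/- Every OAT graph G satisfies χ(G) = ω(G). -/
/-- The disjoint union of two simple graphs. -/
def dUnion {V W : Type} (G : SimpleGraph V) (H : SimpleGraph W) : SimpleGraph (V ⊕ W) :=
  SimpleGraph.fromRel (fun a b =>
    (∃ x y, a = Sum.inl x ∧ b = Sum.inl y ∧ G.Adj x y) ∨
    (∃ x y, a = Sum.inr x ∧ b = Sum.inr y ∧ H.Adj x y))

/-- The join of two simple graphs: all edges between the two sides are added. -/
def joinG {V W : Type} (G : SimpleGraph V) (H : SimpleGraph W) : SimpleGraph (V ⊕ W) :=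
  SimpleGraph.fromRel (fun a b =>
    (∃ x y, a = Sum.inl x ∧ b = Sum.inl y ∧ G.Adj x y) ∨
    (∃ x y, a = Sum.inr x ∧ b = Sum.inr y ∧ H.Adj x y) ∨
    (∃ x y, a = Sum.inl x ∧ b = Sum.inr y))

/-- Adding a new vertex (`none`) whose neighbourhood is the set `X`. When
`X ⊆ N(v)` this is the operation of adding a vertex comparable to `v`. -/
def addComparable {V : Type} (G : SimpleGraph V) (X : Set V) : SimpleGraph (Option V) :=
  SimpleGraph.fromRel (fun a b =>
    (∃ x y, a = some x ∧ b = some y ∧ G.Adj x y) ∨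
    (∃ x, a = none ∧ b = some x ∧ x ∈ X))

/-- Attaching a complete graph on `q` vertices to the vertex `v`: every new
vertex is adjacent to `v` and to every other new vertex. -/
def attachClique {V : Type} (G : SimpleGraph V) (v : V) (q : ℕ) : SimpleGraph (V ⊕ Fin q) :=
  SimpleGraph.fromRel (fun a b =>
    (∃ x y, a = Sum.inl x ∧ b = Sum.inl y ∧ G.Adj x y) ∨
    (∃ i j, a = Sum.inr i ∧ b = Sum.inr j) ∨
    (∃ i, a = Sum.inl v ∧ b = Sum.inr i))

/-- OAT graphs: graphs constructible from single vertices by disjoint union,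
join, adding a comparable vertex, and attaching a clique to a vertex
(up to isomorphism). -/
inductive IsOAT : {V : Type} → SimpleGraph V → Prop
  | single : IsOAT (⊥ : SimpleGraph (Fin 1))
  | dunion {V W : Type} {G : SimpleGraph V} {H : SimpleGraph W} :
      IsOAT G → IsOAT H → IsOAT (dUnion G H)
  | join {V W : Type} {G : SimpleGraph V} {H : SimpleGraph W} :
      IsOAT G → IsOAT H → IsOAT (joinG G H)
  | comparable {V : Type} {G : SimpleGraph V} (v : V) (X : Set V)
      (hX : X ⊆ G.neighborSet v) : IsOAT G → IsOAT (addComparable G X)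
  | clique {V : Type} {G : SimpleGraph V} (v : V) (q : ℕ) (hq : 1 ≤ q) :
      IsOAT G → IsOAT (attachClique G v q)
  | iso {V W : Type} {G : SimpleGraph V} {H : SimpleGraph W} :
      IsOAT G → G ≃g H → IsOAT H

section AdjLemmas

variable {V W : Type} {G : SimpleGraph V} {H : SimpleGraph W}

@[simp] lemma dUnion_adj_ll {x y : V} : (dUnion G H).Adj (.inl x) (.inl y) ↔ G.Adj x y := by
  constructor
  · rintro ⟨hne, (⟨a,b,ha,hb,h⟩|⟨a,b,ha,hb,h⟩)|(⟨a,b,ha,hb,h⟩|⟨a,b,ha,hb,h⟩)⟩ <;>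
      simp_all <;> exact h.symm
  · intro h; exact ⟨by simp [h.ne], Or.inl (Or.inl ⟨x, y, rfl, rfl, h⟩)⟩

@[simp] lemma dUnion_adj_rr {x y : W} : (dUnion G H).Adj (.inr x) (.inr y) ↔ H.Adj x y := by
  constructor
  · rintro ⟨hne, (⟨a,b,ha,hb,h⟩|⟨a,b,ha,hb,h⟩)|(⟨a,b,ha,hb,h⟩|⟨a,b,ha,hb,h⟩)⟩ <;>
      simp_all <;> exact h.symm
  · intro h; exact ⟨by simp [h.ne], Or.inl (Or.inr ⟨x, y, rfl, rfl, h⟩)⟩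

@[simp] lemma dUnion_adj_lr {x : V} {y : W} : ¬ (dUnion G H).Adj (.inl x) (.inr y) := by
  rintro ⟨hne, (⟨a,b,ha,hb,h⟩|⟨a,b,ha,hb,h⟩)|(⟨a,b,ha,hb,h⟩|⟨a,b,ha,hb,h⟩)⟩ <;> simp_all

@[simp] lemma dUnion_adj_rl {x : W} {y : V} : ¬ (dUnion G H).Adj (.inr x) (.inl y) := by
  rintro ⟨hne, (⟨a,b,ha,hb,h⟩|⟨a,b,ha,hb,h⟩)|(⟨a,b,ha,hb,h⟩|⟨a,b,ha,hb,h⟩)⟩ <;> simp_all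

@[simp] lemma joinG_adj_ll {x y : V} : (joinG G H).Adj (.inl x) (.inl y) ↔ G.Adj x y := by
  constructor
  · rintro ⟨hne, h | h⟩ <;>
      rcases h with (⟨a,b,ha,hb,h⟩|⟨a,b,ha,hb,h⟩|⟨a,b,ha,hb⟩) <;> simp_all <;> exact h.symm
  · intro h; exact ⟨by simp [h.ne], Or.inl (Or.inl ⟨x, y, rfl, rfl, h⟩)⟩

@[simp] lemma joinG_adj_rr {x y : W} : (joinG G H).Adj (.inr x) (.inr y) ↔ H.Adj x y := by
  constructor
  · rintro ⟨hne, h | h⟩ <;>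
      rcases h with (⟨a,b,ha,hb,h⟩|⟨a,b,ha,hb,h⟩|⟨a,b,ha,hb⟩) <;> simp_all <;> exact h.symm
  · intro h; exact ⟨by simp [h.ne], Or.inl (Or.inr (Or.inl ⟨x, y, rfl, rfl, h⟩))⟩

@[simp] lemma joinG_adj_lr {x : V} {y : W} : (joinG G H).Adj (.inl x) (.inr y) :=
  ⟨by simp, Or.inl (Or.inr (Or.inr ⟨x, y, rfl, rfl⟩))⟩

@[simp] lemma joinG_adj_rl {x : W} {y : V} : (joinG G H).Adj (.inr x) (.inl y) :=
  ⟨by simp, Or.inr (Or.inr (Or.inr ⟨y, x, rfl, rfl⟩))⟩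

@[simp] lemma addComparable_adj_ss {X : Set V} {x y : V} :
    (addComparable G X).Adj (some x) (some y) ↔ G.Adj x y := by
  constructor
  · rintro ⟨hne, (⟨a,b,ha,hb,h⟩|⟨a,ha,hb,h⟩)|(⟨a,b,ha,hb,h⟩|⟨a,ha,hb,h⟩)⟩ <;> simp_all <;>
      exact h.symm
  · intro h; exact ⟨by simp [h.ne], Or.inl (Or.inl ⟨x, y, rfl, rfl, h⟩)⟩

@[simp] lemma addComparable_adj_ns {X : Set V} {x : V} :
    (addComparable G X).Adj none (some x) ↔ x ∈ X := by
  constructor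
  · rintro ⟨hne, (⟨a,b,ha,hb,h⟩|⟨a,ha,hb,h⟩)|(⟨a,b,ha,hb,h⟩|⟨a,ha,hb,h⟩)⟩ <;> simp_all
  · intro h; exact ⟨by simp, Or.inl (Or.inr ⟨x, rfl, rfl, h⟩)⟩

@[simp] lemma addComparable_adj_sn {X : Set V} {x : V} :
    (addComparable G X).Adj (some x) none ↔ x ∈ X := by
  rw [SimpleGraph.adj_comm, addComparable_adj_ns]

@[simp] lemma addComparable_adj_nn {X : Set V} :
    ¬ (addComparable G X).Adj none none := SimpleGraph.irrefl _

@[simp] lemma attachClique_adj_ll {v : V} {q : ℕ} {x y : V} :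
    (attachClique G v q).Adj (.inl x) (.inl y) ↔ G.Adj x y := by
  constructor
  · rintro ⟨hne, h | h⟩ <;>
      rcases h with (⟨a,b,ha,hb,h⟩|⟨a,b,ha,hb⟩|⟨a,ha,hb⟩) <;> simp_all <;> exact h.symm
  · intro h; exact ⟨by simp [h.ne], Or.inl (Or.inl ⟨x, y, rfl, rfl, h⟩)⟩

@[simp] lemma attachClique_adj_rr {v : V} {q : ℕ} {i j : Fin q} :
    (attachClique G v q).Adj (.inr i) (.inr j) ↔ i ≠ j := by
  constructor
  · rintro ⟨hne, _⟩; simp_all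
  · intro h; exact ⟨by simp [h], Or.inl (Or.inr (Or.inl ⟨i, j, rfl, rfl⟩))⟩

@[simp] lemma attachClique_adj_lr {v : V} {q : ℕ} {x : V} {i : Fin q} :
    (attachClique G v q).Adj (.inl x) (.inr i) ↔ x = v := by
  constructor
  · rintro ⟨hne, h | h⟩ <;>
      rcases h with (⟨a,b,ha,hb,h⟩|⟨a,b,ha,hb⟩|⟨a,ha,hb⟩) <;> simp_all
  · rintro rfl; exact ⟨by simp, Or.inl (Or.inr (Or.inr ⟨i, rfl, rfl⟩))⟩

@[simp] lemma attachClique_adj_rl {v : V} {q : ℕ} {x : V} {i : Fin q} :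
    (attachClique G v q).Adj (.inr i) (.inl x) ↔ x = v := by
  rw [SimpleGraph.adj_comm, attachClique_adj_lr]

end AdjLemmas

lemma cliqueNum_le_of_embedding {α β : Type} [Fintype α] [Fintype β]
    {G : SimpleGraph α} {G' : SimpleGraph β}
    (f : G ↪g G') : G.cliqueNum ≤ G'.cliqueNum := by
  obtain ⟨s, hs⟩ := G.exists_isNClique_cliqueNum
  have hclique : G'.IsClique (s.map f.toEmbedding) := by
    intro a ha b hb hab
    simp only [Finset.coe_map, Set.mem_image, Finset.mem_coe] at ha hb
    obtain ⟨x, hx, rfl⟩ := ha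
    obtain ⟨y, hy, rfl⟩ := hb
    have hxy : x ≠ y := fun h => hab (by rw [h])
    exact f.map_adj_iff.2 (hs.1 hx hy hxy)
  have := hclique.card_le_cliqueNum
  rwa [Finset.card_map, hs.2] at this

lemma cliqueNum_le_of_colorable {α : Type} [Fintype α] {G : SimpleGraph α} {n : ℕ}
    (hc : G.Colorable n) : G.cliqueNum ≤ n := by
  by_contra hlt
  push_neg at hlt
  obtain ⟨s, hs⟩ := G.exists_isNClique_cliqueNum
  exact hc.cliqueFree hlt s hs

theorem oat_key : ∀ {V : Type} {G : SimpleGraph V}, IsOAT G →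
    Finite V ∧ ∀ n, G.cliqueNum ≤ n → G.Colorable n := by
  intro V G h
  induction h with
  | single =>
    classical
    refine ⟨inferInstance, fun n hn => ?_⟩
    have tc : (⊥ : SimpleGraph (Fin 1)).IsClique (↑({0} : Finset (Fin 1))) := by
      simp [SimpleGraph.IsClique]
    have h1 : 1 ≤ (⊥ : SimpleGraph (Fin 1)).cliqueNum := by
      have := tc.card_le_cliqueNum
      simpa using this
    have hn1 : 1 ≤ n := le_trans h1 hn
    exact ⟨SimpleGraph.Coloring.mk (fun _ => ⟨0, by omega⟩) (by intro a b hab; simp at hab)⟩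
  | @dunion V W G H hG hH ihG ihH =>
    obtain ⟨hfV, ihG⟩ := ihG
    obtain ⟨hfW, ihH⟩ := ihH
    classical
    refine ⟨inferInstance, fun n hn => ?_⟩
    have : Fintype V := Fintype.ofFinite V
    have : Fintype W := Fintype.ofFinite W
    have f₁ : G ↪g dUnion G H := ⟨⟨Sum.inl, Sum.inl_injective⟩, by simp⟩
    have f₂ : H ↪g dUnion G H := ⟨⟨Sum.inr, Sum.inr_injective⟩, by simp⟩
    obtain ⟨C₁⟩ := ihG n (le_trans (cliqueNum_le_of_embedding f₁) hn)
    obtain ⟨C₂⟩ := ihH n (le_trans (cliqueNum_le_of_embedding f₂) hn)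
    refine ⟨SimpleGraph.Coloring.mk (Sum.elim C₁ C₂) ?_⟩
    rintro (a|a) (b|b) hab <;> simp only [Sum.elim_inl, Sum.elim_inr] <;> simp at hab
    · exact C₁.valid hab
    · exact C₂.valid hab
  | @join V W G H hG hH ihG ihH =>
    obtain ⟨hfV, ihG⟩ := ihG
    obtain ⟨hfW, ihH⟩ := ihH
    classical
    refine ⟨inferInstance, fun n hn => ?_⟩
    have : Fintype V := Fintype.ofFinite V
    have : Fintype W := Fintype.ofFinite W
    obtain ⟨s, hs⟩ := G.exists_isNClique_cliqueNum
    obtain ⟨t, ht⟩ := H.exists_isNClique_cliqueNum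
    set u : Finset (V ⊕ W) :=
      s.map ⟨Sum.inl, Sum.inl_injective⟩ ∪ t.map ⟨Sum.inr, Sum.inr_injective⟩ with hu
    have huc : (joinG G H).IsClique ↑u := by
      intro a ha b hb hne
      simp only [hu, Finset.coe_union, Set.mem_union, Finset.coe_map, Set.mem_image,
        Finset.mem_coe, Function.Embedding.coeFn_mk] at ha hb
      rcases ha with ⟨x, hx, rfl⟩ | ⟨x, hx, rfl⟩ <;> rcases hb with ⟨y, hy, rfl⟩ | ⟨y, hy, rfl⟩
      · have hxy : x ≠ y := fun h => hne (by rw [h])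
        simpa using hs.1 hx hy hxy
      · simp
      · simp
      · have hxy : x ≠ y := fun h => hne (by rw [h])
        simpa using ht.1 hx hy hxy
    have hcard : u.card = G.cliqueNum + H.cliqueNum := by
      rw [hu, Finset.card_union_of_disjoint, Finset.card_map, Finset.card_map, hs.2, ht.2]
      simp [Finset.disjoint_left]
    have hsum : G.cliqueNum + H.cliqueNum ≤ (joinG G H).cliqueNum := by
      have := huc.card_le_cliqueNum
      rwa [hcard] at this
    obtain ⟨C₁⟩ := ihG G.cliqueNum le_rfl
    obtain ⟨C₂⟩ := ihH H.cliqueNum le_rfl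
    have C : (joinG G H).Coloring (Fin G.cliqueNum ⊕ Fin H.cliqueNum) := by
      refine SimpleGraph.Coloring.mk (Sum.map C₁ C₂) ?_
      rintro (a|a) (b|b) hab <;> simp only [Sum.map_inl, Sum.map_inr] <;> simp at hab ⊢
      · exact C₁.valid hab
      · exact C₂.valid hab
    have := C.colorable
    simp only [Fintype.card_sum, Fintype.card_fin] at this
    exact this.mono (le_trans hsum hn)
  | @comparable V G v X hX hG ih =>
    obtain ⟨hfV, ih⟩ := ih
    classical
    have : Fintype V := Fintype.ofFinite V
    refine ⟨inferInstance, fun n hn => ?_⟩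
    have f : G ↪g addComparable G X := ⟨⟨some, Option.some_injective V⟩, by simp⟩
    obtain ⟨C⟩ := ih n (le_trans (cliqueNum_le_of_embedding f) hn)
    refine ⟨SimpleGraph.Coloring.mk (fun a => Option.elim a (C v) C) ?_⟩
    rintro (_|a) (_|b) hab <;> simp only [Option.elim_none, Option.elim_some] <;> simp at hab
    · exact C.valid (hX hab)
    · exact (C.valid (hX hab)).symm
    · exact C.valid hab
  | @clique V G v q hq hG ih =>
    obtain ⟨hfV, ih⟩ := ih
    classical
    refine ⟨inferInstance, fun n hn => ?_⟩
    have : Fintype V := Fintype.ofFinite V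
    have f : G ↪g attachClique G v q := ⟨⟨Sum.inl, Sum.inl_injective⟩, by simp⟩
    set u : Finset (V ⊕ Fin q) :=
      insert (Sum.inl v) ((Finset.univ : Finset (Fin q)).map ⟨Sum.inr, Sum.inr_injective⟩)
      with hu
    have huc : (attachClique G v q).IsClique ↑u := by
      intro a ha b hb hne
      simp only [hu, Finset.coe_insert, Set.mem_insert_iff, Finset.coe_map, Set.mem_image,
        Finset.mem_coe, Function.Embedding.coeFn_mk, Finset.mem_univ] at ha hb
      rcases ha with rfl | ⟨i, -, rfl⟩ <;> rcases hb with rfl | ⟨j, -, rfl⟩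
      · exact absurd rfl hne
      · simp
      · simp
      · have hij : i ≠ j := fun h => hne (by rw [h])
        simpa using hij
    have hcard : u.card = q + 1 := by
      rw [hu, Finset.card_insert_of_notMem (by simp), Finset.card_map, Finset.card_univ,
        Fintype.card_fin]
    have h2 : q + 1 ≤ (attachClique G v q).cliqueNum := by
      have := huc.card_le_cliqueNum
      rwa [hcard] at this
    have hqn : q + 1 ≤ n := le_trans h2 hn
    obtain ⟨C⟩ := ih n (le_trans (cliqueNum_le_of_embedding f) hn)
    have hcard2 : Fintype.card (Fin q) ≤ Fintype.card {c : Fin n // c ≠ C v} := by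
      simp [Fintype.card_subtype_compl]
      omega
    obtain ⟨e⟩ := Function.Embedding.nonempty_of_card_le hcard2
    refine ⟨SimpleGraph.Coloring.mk (Sum.elim C (fun i => (e i).1)) ?_⟩
    rintro (a|i) (b|j) hab <;> simp only [Sum.elim_inl, Sum.elim_inr] <;> simp at hab
    · exact C.valid hab
    · subst hab; exact fun h => (e j).2 h.symm
    · subst hab; exact (e i).2
    · exact fun h => hab (e.injective (Subtype.ext h))
  | @iso V W G H hG e ih =>
    obtain ⟨hfV, ih⟩ := ih
    have hfW : Finite W := Finite.of_equiv V e.toEquiv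
    refine ⟨hfW, fun n hn => ?_⟩
    have : Fintype V := Fintype.ofFinite V
    have : Fintype W := Fintype.ofFinite W
    have h1 : G.cliqueNum ≤ H.cliqueNum := cliqueNum_le_of_embedding e.toEmbedding
    exact SimpleGraph.Colorable.of_hom e.symm.toHom (ih n (le_trans h1 hn))

/-- Every OAT graph satisfies χ(G) = ω(G). -/
theorem stmt4 {V : Type} (G : SimpleGraph V) (h : IsOAT G) :
    G.chromaticNumber = (G.cliqueNum : ℕ∞) := by
  obtain ⟨hfin, hcol⟩ := oat_key h
  have : Fintype V := Fintype.ofFinite V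
  have hle : G.chromaticNumber ≤ (G.cliqueNum : ℕ∞) :=
    (hcol _ le_rfl).chromaticNumber_le
  have hco : G.Colorable (ENat.toNat G.chromaticNumber) :=
    G.colorable_chromaticNumber_of_fintype
  have hge : G.cliqueNum ≤ ENat.toNat G.chromaticNumber := cliqueNum_le_of_colorable hco
  refine le_antisymm hle ?_
  have hne : G.chromaticNumber ≠ ⊤ := (lt_of_le_of_lt hle (by simp)).ne
  calc (G.cliqueNum : ℕ∞) ≤ (ENat.toNat G.chromaticNumber : ℕ∞) := by exact_mod_cast hge
    _ = G.chromaticNumber := ENat.coe_toNat hne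
end

section
/- (Renaming Lemma) Let α and β be two proper colourings of a finite graph G that induce the same partition of the vertices into k colour classes, using colours from a common set S with |S| > k. Then α can be transformed into β by a sequence of single-vertex recolourings, each intermediate colouring being a proper colouring of G with colours from S, such that each vertex is recoloured at most 2 times. -/
namespace Stmt5Aux
set_option linter.unusedSectionVars false
set_option maxHeartbeats 1000000
variable {V C : Type} [Fintype V] [DecidableEq C] (G : SimpleGraph V) (S : Finset C)

def Ok (γ : V → C) : Prop :=
  (∀ u v, G.Adj u v → γ u ≠ γ v) ∧ ∀ v, γ v ∈ S

inductive Chain : (V → C) → (V → C) → (V → ℕ) → Prop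
  | refl (γ : V → C) (f : V → ℕ) : Ok G S γ → Chain γ γ f
  | step {γ δ ε : V → C} {f g : V → ℕ} : Chain γ δ f → Ok G S ε →
      (∃! x, δ x ≠ ε x) →
      (∀ x, (f x + if δ x = ε x then 0 else 1) ≤ g x) → Chain γ ε g

variable {G S}

theorem Chain.mono {γ δ : V → C} {f g : V → ℕ} (h : Chain G S γ δ f)
    (hfg : ∀ x, f x ≤ g x) : Chain G S γ δ g := by
  induction h generalizing g with
  | refl a b => exact Chain.refl _ _ b
  | step hc hOk hd hb ih =>
      exact Chain.step hc hOk hd (fun x => le_trans (hb x) (hfg x))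

theorem Chain.trans {γ δ ε : V → C} {f g : V → ℕ} (h1 : Chain G S γ δ f)
    (h2 : Chain G S δ ε g) : Chain G S γ ε (fun x => f x + g x) := by
  induction h2 with
  | refl a b => exact h1.mono (fun x => Nat.le_add_right _ _)
  | @step δ2 ε2 f2 g2 hc hOk hd hb ih =>
      exact Chain.step ih hOk hd (fun x => by
        have h1 := hb x
        show f x + f2 x + (if δ2 x = ε2 x then 0 else 1) ≤ f x + g2 x
        by_cases h : δ2 x = ε2 x <;> simp [h] at h1 ⊢ <;> omega)

theorem Chain.toSeq {γ δ : V → C} {f : V → ℕ} (h : Chain G S γ δ f) :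
    ∃ (m : ℕ) (c : ℕ → V → C),
      c 0 = γ ∧ c m = δ ∧
      (∀ i ≤ m, Ok G S (c i)) ∧
      (∀ i < m, ∃! x, c i x ≠ c (i + 1) x) ∧
      ∀ x, ((Finset.range m).filter (fun i => c i x ≠ c (i + 1) x)).card ≤ f x := by
  induction h with
  | refl a b =>
      exact ⟨0, fun _ => γ, rfl, rfl, fun i _ => b, fun i hi => by omega,
        fun x => by simp⟩
  | @step δ3 ε3 f3 g3 hc hOk hd hb ih =>
      obtain ⟨m, c, h0, hm, hok, hstep, hcnt⟩ := ih
      refine ⟨m + 1, fun i => if i ≤ m then c i else ε3, by simpa using h0, by simp, ?_, ?_, ?_⟩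
      · intro i hi
        by_cases h : i ≤ m
        · simpa [h] using hok i h
        · simpa [h] using hOk
      · intro i hi
        by_cases h : i + 1 ≤ m
        · simpa [h, Nat.le_of_succ_le h] using hstep i (by omega)
        · have hi' : i = m := by omega
          subst hi'
          simpa [h, hm] using hd
      · intro x
        have key : ((Finset.range (m + 1)).filter
              (fun i => (fun j => if j ≤ m then c j else ε3) i x ≠ (fun j => if j ≤ m then c j else ε3) (i+1) x)).card
            ≤ ((Finset.range m).filter (fun i => c i x ≠ c (i + 1) x)).card
              + (if δ3 x = ε3 x then 0 else 1) := by
          rw [Finset.range_add_one, Finset.filter_insert]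
          have hsame : ((Finset.range m).filter
              (fun i => (fun j => if j ≤ m then c j else ε3) i x ≠ (fun j => if j ≤ m then c j else ε3) (i+1) x))
              = ((Finset.range m).filter (fun i => c i x ≠ c (i + 1) x)) := by
            apply Finset.filter_congr
            intro i hi
            rw [Finset.mem_range] at hi
            simp [Nat.le_of_lt hi, show i+1 ≤ m from hi]
          by_cases h : (fun j => if j ≤ m then c j else ε3) m x ≠ (fun j => if j ≤ m then c j else ε3) (m+1) x
          · have hδε : ¬ δ3 x = ε3 x := by
              simpa [hm] using h
            rw [if_pos h, hsame, if_neg hδε,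
              Finset.card_insert_of_notMem (by simp)]
          · rw [if_neg h, hsame]
            omega
        refine le_trans key (le_trans ?_ (hb x))
        have := hcnt x; omega

-- Ok of a partial recolouring to a fresh colour
theorem ok_update [DecidableEq V] {γ : V → C} {t : C} (s : Finset V)
    (hOk : Ok G S γ) (ht : t ∈ S) (fresh : ∀ u, γ u ≠ t)
    (indep : ∀ u ∈ s, ∀ w ∈ s, ¬ G.Adj u w) :
    Ok G S (fun u => if u ∈ s then t else γ u) := by
  constructor
  · intro u v hadj
    by_cases hu : u ∈ s <;> by_cases hv : v ∈ s <;> simp [hu, hv]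
    · exact absurd hadj (indep u hu v hv)
    · exact fun h => fresh v h.symm
    · exact fresh u
    · exact hOk.1 u v hadj
  · intro v
    by_cases hv : v ∈ s <;> simp [hv, ht, hOk.2 v]

theorem chain_recolour [DecidableEq V] {γ : V → C} {t : C} (s : Finset V)
    (hOk : Ok G S γ) (ht : t ∈ S) (fresh : ∀ u, γ u ≠ t)
    (indep : ∀ u ∈ s, ∀ w ∈ s, ¬ G.Adj u w) :
    Chain G S γ (fun u => if u ∈ s then t else γ u) (fun u => if u ∈ s then 1 else 0) := by
  induction s using Finset.induction_on with
  | empty => simpa using Chain.refl γ (fun _ => 0) hOk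
  | @insert a s' ha ih =>
      have indep' : ∀ u ∈ s', ∀ w ∈ s', ¬ G.Adj u w := fun u hu w hw =>
        indep u (Finset.mem_insert_of_mem hu) w (Finset.mem_insert_of_mem hw)
      refine Chain.step (ih indep') (ok_update _ hOk ht fresh indep) ?_ ?_
      · refine ⟨a, ?_, ?_⟩
        · simp [ha, fresh a]
        · intro y hy
          by_contra hya
          by_cases hys : y ∈ s'
          · simp [hys, Finset.mem_insert_of_mem hys] at hy
          · simp [hys, hya, Finset.mem_insert] at hy
      · intro x
        by_cases hxa : x = a
        · subst hxa
          simp [ha, fresh x]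
        · by_cases hxs : x ∈ s' <;> simp [hxs, hxa, Finset.mem_insert]

-- if γ-partition refines β-partition then β uses at most as many colours
theorem card_image_le (γ β : V → C) (h : ∀ x y, γ x = γ y → β x = β y) :
    (Finset.univ.image β).card ≤ (Finset.univ.image γ).card := by
  classical
  apply Finset.card_le_card_of_surjOn
    (fun c => if hc : ∃ u, γ u = c then β hc.choose else c)
  intro d hd
  simp only [Finset.coe_image, Set.mem_image, Finset.mem_coe, Finset.mem_image] at hd ⊢
  obtain ⟨u, -, rfl⟩ := hd
  have hex : ∃ w, γ w = γ u := ⟨u, rfl⟩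
  refine ⟨γ u, ⟨u, by simp⟩, ?_⟩
  simp only [dif_pos hex]
  exact h _ _ hex.choose_spec

theorem card_image_eq (γ β : V → C) (h : ∀ x y, γ x = γ y ↔ β x = β y) :
    (Finset.univ.image γ).card = (Finset.univ.image β).card :=
  le_antisymm (card_image_le β γ (fun x y hxy => (h x y).2 hxy))
    (card_image_le γ β (fun x y hxy => (h x y).1 hxy))

/-- cost budget for transforming `γ` into `β` -/
def Bound (β γ : V → C) (x : V) : ℕ :=
  if γ x = β x then 0 else if γ x ∈ Finset.univ.image β then 2 else 1

/-- termination measure -/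
def Meas (β γ : V → C) : ℕ :=
  2 * (Finset.univ.filter (fun v => γ v ≠ β v)).card +
    (if ∃ v, γ v ≠ β v ∧ ∀ u, γ u ≠ β v then 0 else 1)

theorem main [DecidableEq V] (β : V → C) (hβ : Ok G S β)
    (hcard : (Finset.univ.image β).card < S.card) :
    ∀ n (γ : V → C), Ok G S γ → (∀ x y, γ x = γ y ↔ β x = β y) →
      Meas β γ ≤ n → Chain G S γ β (Bound β γ) := by
  intro n
  induction n with
  | zero =>
      intro γ hOk hpart hm
      by_cases hne : ∀ x, γ x = β x
      · have : γ = β := funext hne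
        subst this
        exact Chain.refl γ _ hOk
      · exfalso
        push_neg at hne
        obtain ⟨x, hx⟩ := hne
        have hx' : x ∈ Finset.univ.filter (fun v => γ v ≠ β v) := by simp [hx]
        have : 0 < (Finset.univ.filter (fun v => γ v ≠ β v)).card :=
          Finset.card_pos.2 ⟨x, hx'⟩
        unfold Meas at hm
        omega
  | succ n ih =>
      intro γ hOk hpart hm
      by_cases hne : ∀ x, γ x = β x
      · have : γ = β := funext hne
        subst this
        exact Chain.refl γ _ hOk
      push_neg at hne
      -- common machinery given a vertex v (class to recolour) and fresh colour t
      -- we inline both cases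
      by_cases hfree : ∃ v, γ v ≠ β v ∧ ∀ u, γ u ≠ β v
      · -- Case A: some differing class has a free target
        obtain ⟨v, hv, hfr⟩ := hfree
        set t := β v with htdef
        set P : Finset V := Finset.univ.filter (fun u => β u = β v) with hP
        have hPmem : ∀ u, u ∈ P ↔ β u = β v := by intro u; simp [hP]
        have hconst : ∀ u ∈ P, γ u = γ v := by
          intro u hu; exact (hpart u v).2 ((hPmem u).1 hu)
        have indep : ∀ u ∈ P, ∀ w ∈ P, ¬ G.Adj u w := by
          intro u hu w hw hadj
          exact hβ.1 u w hadj (((hPmem u).1 hu).trans ((hPmem w).1 hw).symm)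
        set γ' : V → C := fun u => if u ∈ P then t else γ u with hγ'
        have hγ'val : ∀ u, γ' u = if β u = β v then t else γ u := by
          intro u
          by_cases h : β u = β v <;> simp [hγ', hPmem, h]
        have hOk' : Ok G S γ' := ok_update P hOk (hβ.2 v) hfr indep
        have hchain1 : Chain G S γ γ' (fun u => if u ∈ P then 1 else 0) :=
          chain_recolour P hOk (hβ.2 v) hfr indep
        -- new partition is still the β-partition
        have hpart' : ∀ x y, γ' x = γ' y ↔ β x = β y := by
          intro x y
          rw [hγ'val x, hγ'val y]
          by_cases hx : β x = β v <;> by_cases hy : β y = β v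
          · simp [hx, hy, hx.trans hy.symm]
          · simp only [if_pos hx, if_neg hy]
            constructor
            · intro h; exact absurd h.symm (hfr y)
            · intro h; exact absurd (h.symm.trans hx) hy
          · simp only [if_neg hx, if_pos hy]
            constructor
            · intro h; exact absurd h (hfr x)
            · intro h; exact absurd (h.trans hy) hx
          · simpa [hx, hy] using hpart x y
        -- measure decreases
        have hsub : Finset.univ.filter (fun u => γ' u ≠ β u) ⊂
            Finset.univ.filter (fun u => γ u ≠ β u) := by
          constructor
          · intro u hu
            rw [Finset.mem_filter] at hu ⊢
            refine ⟨hu.1, ?_⟩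
            have := hu.2
            rw [hγ'val u] at this
            by_cases h : β u = β v
            · rw [if_pos h] at this; exact absurd h.symm this
            · rwa [if_neg h] at this
          · intro hsub'
            have hv1 : v ∈ Finset.univ.filter (fun u => γ u ≠ β u) := by simp; exact hv
            have hv2 := hsub' hv1
            rw [Finset.mem_filter, hγ'val v, if_pos rfl] at hv2
            exact hv2.2 rfl
        have hmeas' : Meas β γ' ≤ n := by
          have hlt := Finset.card_lt_card hsub
          unfold Meas at hm ⊢
          split <;> split at hm <;> omega
        have hchain2 : Chain G S γ' β (Bound β γ') := ih γ' hOk' hpart' hmeas'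
        refine (hchain1.trans hchain2).mono ?_
        intro x
        unfold Bound
        by_cases hx : β x = β v
        · have hxP : x ∈ P := (hPmem x).2 hx
          have h1 : γ' x = β x := by rw [hγ'val x, if_pos hx, hx]
          have h2 : γ x ≠ β x := by
            rw [hconst x hxP, hx]; exact hv
          simp only [hxP, if_pos, h1, if_neg h2]
          split <;> omega
        · have hxP : x ∉ P := fun h => hx ((hPmem x).1 h)
          have h1 : γ' x = γ x := by rw [hγ'val x, if_neg hx]
          simp [hxP, h1]
      · -- Case B: no free target; recolour one class to a spare colour
        obtain ⟨v, hv⟩ := hne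
        -- a spare colour t ∈ S, unused by γ
        have himγ : Finset.univ.image γ ⊆ S := by
          intro c hc
          rw [Finset.mem_image] at hc
          obtain ⟨u, -, rfl⟩ := hc
          exact hOk.2 u
        have hcγ : (Finset.univ.image γ).card < S.card := by
          rw [card_image_eq γ β hpart]; exact hcard
        have hss : Finset.univ.image γ ⊂ S :=
          ⟨himγ, fun h => absurd (Finset.card_le_card h) (by omega)⟩
        obtain ⟨t, htS, htim⟩ := Finset.exists_of_ssubset hss
        have fresh : ∀ u, γ u ≠ t := fun u h =>
          htim (Finset.mem_image.2 ⟨u, Finset.mem_univ u, h⟩)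
        -- since no differing class has a free target, t is not a β-colour
        have htβ : ∀ u, β u ≠ t := by
          intro u h
          refine hfree ⟨u, ?_, ?_⟩
          · intro hh; exact fresh u (hh.trans h)
          · rw [h]; exact fresh
        have htimβ : t ∉ Finset.univ.image β := by
          rw [Finset.mem_image]
          rintro ⟨u, -, hu⟩
          exact htβ u hu
        -- the current colour of every differing class is a β-target
        set Dset : Finset V := Finset.univ.filter (fun u => γ u ≠ β u) with hDset
        have hfree2 := hfree
        push_neg at hfree2
        have hTD : Dset.image β ⊆ Dset.image γ := by
          intro c hc
          rw [Finset.mem_image] at hc ⊢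
          obtain ⟨u, hu, rfl⟩ := hc
          rw [hDset, Finset.mem_filter] at hu
          obtain ⟨w, hw⟩ := hfree2 u hu.2
          refine ⟨w, ?_, hw⟩
          rw [hDset, Finset.mem_filter]
          refine ⟨Finset.mem_univ w, ?_⟩
          intro hww
          have hβwu : β w = β u := hww.symm.trans hw
          have : γ w = γ u := (hpart w u).2 hβwu
          exact hu.2 ((this.symm.trans hww).trans hβwu)
        have hDT : (Dset.image γ).card ≤ (Dset.image β).card := by
          apply Finset.card_le_card_of_surjOn
            (fun c => if hc : ∃ u, u ∈ Dset ∧ β u = c then γ hc.choose else c)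
          intro d hd
          simp only [Finset.coe_image, Set.mem_image, Finset.mem_coe,
            Finset.mem_image] at hd ⊢
          obtain ⟨u, hu, rfl⟩ := hd
          have hex : ∃ w, w ∈ Dset ∧ β w = β u := ⟨u, hu, rfl⟩
          refine ⟨β u, ⟨u, hu, rfl⟩, ?_⟩
          simp only [dif_pos hex]
          exact (hpart _ u).2 hex.choose_spec.2
        have hTDeq : Dset.image β = Dset.image γ :=
          Finset.eq_of_subset_of_card_le hTD hDT
        have hvD : γ v ∈ Dset.image β := by
          rw [hTDeq, Finset.mem_image]
          exact ⟨v, by rw [hDset, Finset.mem_filter]; exact ⟨Finset.mem_univ v, hv⟩, rfl⟩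
        obtain ⟨u₀, hu₀D, hu₀⟩ := Finset.mem_image.1 hvD
        rw [hDset, Finset.mem_filter] at hu₀D
        have hmemβ : γ v ∈ Finset.univ.image β :=
          Finset.mem_image.2 ⟨u₀, Finset.mem_univ u₀, hu₀⟩
        -- recolour the class of v to the spare colour t
        set P : Finset V := Finset.univ.filter (fun u => β u = β v) with hP
        have hPmem : ∀ u, u ∈ P ↔ β u = β v := by intro u; simp [hP]
        have hconst : ∀ u ∈ P, γ u = γ v := by
          intro u hu; exact (hpart u v).2 ((hPmem u).1 hu)
        have indep : ∀ u ∈ P, ∀ w ∈ P, ¬ G.Adj u w := by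
          intro u hu w hw hadj
          exact hβ.1 u w hadj (((hPmem u).1 hu).trans ((hPmem w).1 hw).symm)
        set γ' : V → C := fun u => if u ∈ P then t else γ u with hγ'
        have hγ'val : ∀ u, γ' u = if β u = β v then t else γ u := by
          intro u
          by_cases h : β u = β v <;> simp [hγ', hPmem, h]
        have hOk' : Ok G S γ' := ok_update P hOk htS fresh indep
        have hchain1 : Chain G S γ γ' (fun u => if u ∈ P then 1 else 0) :=
          chain_recolour P hOk htS fresh indep
        have hpart' : ∀ x y, γ' x = γ' y ↔ β x = β y := by
          intro x y
          rw [hγ'val x, hγ'val y]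
          by_cases hx : β x = β v <;> by_cases hy : β y = β v
          · simp [hx, hy, hx.trans hy.symm]
          · simp only [if_pos hx, if_neg hy]
            constructor
            · intro h; exact absurd h.symm (fresh y)
            · intro h; exact absurd (h.symm.trans hx) hy
          · simp only [if_neg hx, if_pos hy]
            constructor
            · intro h; exact absurd h (fresh x)
            · intro h; exact absurd (h.trans hy) hx
          · simpa [hx, hy] using hpart x y
        -- the differing set is unchanged
        have hfeq : Finset.univ.filter (fun u => γ' u ≠ β u)
            = Finset.univ.filter (fun u => γ u ≠ β u) := by
          ext u
          rw [Finset.mem_filter, Finset.mem_filter, hγ'val u]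
          by_cases h : β u = β v
          · rw [if_pos h]
            constructor
            · intro _
              refine ⟨Finset.mem_univ u, ?_⟩
              rw [(hpart u v).2 h, h]
              exact hv
            · intro _
              exact ⟨Finset.mem_univ u, fun hh => htβ u hh.symm⟩
          · rw [if_neg h]
        -- but now there is a free target, namely γ v
        have hu₀P : ¬ β u₀ = β v := by
          intro h
          exact hv (hu₀.symm.trans h)
        have hfree' : ∃ w, γ' w ≠ β w ∧ ∀ z, γ' z ≠ β w := by
          refine ⟨u₀, ?_, ?_⟩
          · rw [hγ'val u₀, if_neg hu₀P]
            exact hu₀D.2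
          · intro z
            rw [hu₀, hγ'val z]
            by_cases hz : β z = β v
            · rw [if_pos hz]
              exact fun h => fresh v h.symm
            · rw [if_neg hz]
              intro h
              exact hz ((hpart z v).1 h)
        have hmeas' : Meas β γ' ≤ n := by
          unfold Meas at hm ⊢
          rw [if_pos hfree', hfeq]
          rw [if_neg hfree] at hm
          omega
        have hchain2 : Chain G S γ' β (Bound β γ') := ih γ' hOk' hpart' hmeas'
        refine (hchain1.trans hchain2).mono ?_
        intro x
        by_cases hx : β x = β v
        · have hxP : x ∈ P := (hPmem x).2 hx
          have e1 : γ' x = t := by rw [hγ'val x, if_pos hx]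
          have e2 : γ x ≠ β x := by
            rw [hconst x hxP, hx]; exact hv
          have e3 : γ x ∈ Finset.univ.image β := by
            rw [hconst x hxP]; exact hmemβ
          have e4 : γ' x ≠ β x := by
            rw [e1]; exact fun h => htβ x h.symm
          have L2 : Bound β γ' x = 1 := by
            unfold Bound; rw [if_neg e4, e1, if_neg htimβ]
          have L3 : Bound β γ x = 2 := by
            unfold Bound; rw [if_neg e2, if_pos e3]
          simp only [if_pos hxP, L2, L3]
          omega
        · have hxP : x ∉ P := fun h => hx ((hPmem x).1 h)
          have h1 : γ' x = γ x := by rw [hγ'val x, if_neg hx]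
          have hB : Bound β γ' x = Bound β γ x := by unfold Bound; rw [h1]
          simp only [if_neg hxP, hB]
          omega
end Stmt5Aux

/-- Renaming Lemma: if two proper colourings `α` and `β` of a finite graph `G`, with colours
drawn from a set `S`, induce the same partition of the vertices into `k` colour classes and
`|S| > k`, then `α` can be transformed into `β` by single-vertex recolourings through proper
`S`-colourings, recolouring each vertex at most 2 times. -/
theorem stmt5 {V C : Type} [Fintype V] [DecidableEq C] (G : SimpleGraph V)
    (S : Finset C) (k : ℕ) (α β : V → C)
    (hαp : ∀ u v, G.Adj u v → α u ≠ α v) (hβp : ∀ u v, G.Adj u v → β u ≠ β v)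
    (hαS : ∀ v, α v ∈ S) (hβS : ∀ v, β v ∈ S)
    (hpart : ∀ x y, α x = α y ↔ β x = β y)
    (hk : (Finset.univ.image α).card = k)
    (hS : k < S.card) :
    ∃ (m : ℕ) (c : ℕ → V → C),
      c 0 = α ∧ c m = β ∧
      (∀ i ≤ m, (∀ u v, G.Adj u v → c i u ≠ c i v) ∧ ∀ v, c i v ∈ S) ∧
      (∀ i < m, ∃! x, c i x ≠ c (i + 1) x) ∧
      ∀ x, ((Finset.range m).filter (fun i => c i x ≠ c (i + 1) x)).card ≤ 2 := by
  haveI : DecidableEq V := Classical.decEq V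
  have hOkα : Stmt5Aux.Ok G S α := ⟨hαp, hαS⟩
  have hOkβ : Stmt5Aux.Ok G S β := ⟨hβp, hβS⟩
  have hβk : (Finset.univ.image β).card < S.card := by
    rw [← Stmt5Aux.card_image_eq α β hpart, hk]; exact hS
  have hchain := Stmt5Aux.main β hOkβ hβk (Stmt5Aux.Meas β α) α hOkα hpart le_rfl
  have hchain2 : Stmt5Aux.Chain G S α β (fun _ => 2) := by
    refine hchain.mono (fun x => ?_)
    unfold Stmt5Aux.Bound
    split_ifs <;> omega
  obtain ⟨m, c, h0, hm, hok, hstep, hcnt⟩ := hchain2.toSeq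
  exact ⟨m, c, h0, hm, fun i hi => hok i hi, hstep, hcnt⟩
end

section
/- For any set S of colours with |S| > k and any two proper S-colourings of the complete graph K_k that are both injective, one can be transformed into the other by recolouring each vertex at most twice, with every intermediate colouring proper (injective on K_k) and using colours from S. -/
section Aux

variable {C : Type} [DecidableEq C]

private lemma count_shift (m : ℕ) (Q : ℕ → Prop) [DecidablePred Q] :
    ((Finset.range (m+1)).filter Q).card
      = ((Finset.range m).filter (fun i => Q (i+1))).card + (if Q 0 then 1 else 0) := by
  simp only [Finset.card_filter]
  rw [Finset.sum_range_succ']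

/-- Local bound on the number of recolourings of a vertex. -/
private def bnd {k : ℕ} (β γ : Fin k → C) (x : Fin k) : ℕ :=
  if γ x = β x then 0 else if ∃ y, β y = γ x then 2 else 1

private lemma bnd_le_two {k : ℕ} (β γ : Fin k → C) (x : Fin k) : bnd β γ x ≤ 2 := by
  unfold bnd; split_ifs <;> omega

private lemma update_inj {k : ℕ} {γ : Fin k → C} (hγ : Function.Injective γ) {v : Fin k} {a : C}
    (ha : ∀ w, γ w ≠ a) : Function.Injective (Function.update γ v a) := by
  intro x y h
  by_cases hx : x = v <;> by_cases hy : y = v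
  · rw [hx, hy]
  · subst hx
    rw [Function.update_self, Function.update_of_ne hy] at h
    exact absurd h.symm (ha y)
  · subst hy
    rw [Function.update_self, Function.update_of_ne hx] at h
    exact absurd h (ha x)
  · rw [Function.update_of_ne hx, Function.update_of_ne hy] at h
    exact hγ h

private lemma step_prepend {k : ℕ} {S : Finset C} {β γ γ' : Fin k → C} {x0 : Fin k}
    (hinj : Function.Injective γ) (hγS : ∀ v, γ v ∈ S)
    (hne : γ x0 ≠ γ' x0) (heq : ∀ y, y ≠ x0 → γ y = γ' y)
    (b : Fin k → ℕ)
    (h : ∃ (m : ℕ) (c : ℕ → Fin k → C), c 0 = γ' ∧ c m = β ∧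
      (∀ i ≤ m, Function.Injective (c i) ∧ ∀ v, c i v ∈ S) ∧
      (∀ i < m, ∃! x, c i x ≠ c (i + 1) x) ∧
      ∀ x, ((Finset.range m).filter (fun i => c i x ≠ c (i + 1) x)).card ≤ b x) :
    ∃ (m : ℕ) (c : ℕ → Fin k → C), c 0 = γ ∧ c m = β ∧
      (∀ i ≤ m, Function.Injective (c i) ∧ ∀ v, c i v ∈ S) ∧
      (∀ i < m, ∃! x, c i x ≠ c (i + 1) x) ∧
      ∀ x, ((Finset.range m).filter (fun i => c i x ≠ c (i + 1) x)).card
        ≤ b x + (if x = x0 then 1 else 0) := by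
  obtain ⟨m, c, h0, hm, hP, hstep, hcnt⟩ := h
  refine ⟨m+1, fun i => match i with | 0 => γ | j+1 => c j, rfl, hm, ?_, ?_, ?_⟩
  · rintro (_|i) hi
    · exact ⟨hinj, hγS⟩
    · exact hP i (by omega)
  · rintro (_|i) hi
    · show ∃! x, γ x ≠ c 0 x
      rw [h0]
      exact ⟨x0, hne, fun y hy => by_contra fun h' => hy (heq y h')⟩
    · exact hstep i (by omega)
  · intro x
    rw [count_shift]
    have h1 : ((Finset.range m).filter (fun i => c i x ≠ c (i+1) x)).card ≤ b x := hcnt x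
    have h2 : (if γ x ≠ c 0 x then 1 else 0) ≤ (if x = x0 then 1 else 0) := by
      rcases eq_or_ne x x0 with rfl | hx
      · split_ifs <;> omega
      · rw [h0, if_neg (by simpa using heq x hx)]
        omega
    calc ((Finset.range m).filter (fun i => c i x ≠ c (i+1) x)).card
          + (if γ x ≠ c 0 x then 1 else 0)
        ≤ b x + (if x = x0 then 1 else 0) := Nat.add_le_add h1 h2

private lemma aux {k : ℕ} {S : Finset C} (hS : k < S.card) (β : Fin k → C)
    (hβ : Function.Injective β) (hβS' : ∀ v, β v ∈ S) :
    ∀ (N : ℕ) (γ : Fin k → C), Function.Injective γ → (∀ v, γ v ∈ S) →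
      (Finset.univ.filter (fun v => γ v ≠ β v)).card * (k+1)
        + (Finset.univ.filter (fun v => γ v ≠ β v ∧ ∃ w, γ w = β v)).card ≤ N →
      ∃ (m : ℕ) (c : ℕ → Fin k → C), c 0 = γ ∧ c m = β ∧
        (∀ i ≤ m, Function.Injective (c i) ∧ ∀ v, c i v ∈ S) ∧
        (∀ i < m, ∃! x, c i x ≠ c (i + 1) x) ∧
        ∀ x, ((Finset.range m).filter (fun i => c i x ≠ c (i + 1) x)).card ≤ bnd β γ x := by
  intro N
  induction N with
  | zero =>
      intro γ hγ hγS hmeas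
      have hM : (Finset.univ.filter (fun v => γ v ≠ β v)).card = 0 := by
        nlinarith [Finset.card_le_card (Finset.empty_subset
          (Finset.univ.filter (fun v => γ v ≠ β v)))]
      have hall : ∀ v, γ v = β v := by
        intro v
        by_contra hv
        have : v ∈ Finset.univ.filter (fun v => γ v ≠ β v) := by simp [hv]
        have := Finset.card_pos.mpr ⟨v, this⟩
        omega
      refine ⟨0, fun _ => γ, rfl, funext hall, ?_, ?_, ?_⟩
      · intro i _; exact ⟨hγ, hγS⟩
      · intro i hi; omega
      · intro x; simp
  | succ n ih =>
      intro γ hγ hγS hmeas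
      by_cases hall : ∀ v, γ v = β v
      · refine ⟨0, fun _ => γ, rfl, funext hall, ?_, ?_, ?_⟩
        · intro i _; exact ⟨hγ, hγS⟩
        · intro i hi; omega
        · intro x; simp
      push_neg at hall
      by_cases hblock : ∀ v, γ v ≠ β v → ∃ w, γ w = β v
      · -- every mismatched vertex's target colour is occupied: park one vertex
        obtain ⟨v, hv⟩ := hall
        -- a free colour f
        have himg : (Finset.univ.image γ).card < S.card := by
          rwa [Finset.card_image_of_injective _ hγ, Finset.card_univ, Fintype.card_fin]
        have hnsub : ¬ S ⊆ Finset.univ.image γ := fun h =>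
          absurd (Finset.card_le_card h) (by omega)
        obtain ⟨f, hfS, hfγ⟩ := Finset.not_subset.mp hnsub
        have hfree : ∀ w, γ w ≠ f := fun w hw => hfγ (Finset.mem_image.mpr ⟨w, by simp, hw⟩)
        -- f is not a β-colour
        have hfβ : ∀ u, β u ≠ f := by
          intro u hu
          by_cases h : γ u = β u
          · exact hfree u (h.trans hu)
          · obtain ⟨w, hw⟩ := hblock u h
            exact hfree w (hw.trans hu)
        -- γ v is a β-colour of a mismatched vertex u0
        set M := Finset.univ.filter (fun u => γ u ≠ β u) with hMdef
        have hvM : v ∈ M := by simp [hMdef, hv]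
        have hsub : M.image β ⊆ M.image γ := by
          intro col hcol
          obtain ⟨u, huM, rfl⟩ := Finset.mem_image.mp hcol
          have huβ : γ u ≠ β u := by simpa [hMdef] using huM
          obtain ⟨w, hw⟩ := hblock u huβ
          have hwu : w ≠ u := fun h => huβ (h ▸ hw)
          have hwM : w ∈ M := by
            simp only [hMdef, Finset.mem_filter, Finset.mem_univ, true_and]
            intro hww
            exact hwu (hβ (hww.symm.trans hw))
          exact Finset.mem_image.mpr ⟨w, hwM, hw⟩
        have himeq : M.image β = M.image γ :=
          Finset.eq_of_subset_of_card_le hsub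
            (by rw [Finset.card_image_of_injective _ hγ, Finset.card_image_of_injective _ hβ])
        have hγvβ : ∃ u0 ∈ M, β u0 = γ v := by
          have : γ v ∈ M.image γ := Finset.mem_image.mpr ⟨v, hvM, rfl⟩
          rw [← himeq] at this
          exact Finset.mem_image.mp this
        obtain ⟨u0, hu0M, hu0⟩ := hγvβ
        -- the new colouring
        set γ' := Function.update γ v f with hγ'def
        have hγ'v : γ' v = f := Function.update_self v f γ
        have hγ'ne : ∀ y, y ≠ v → γ y = γ' y := fun y hy =>
          (Function.update_of_ne hy f γ).symm
        have hγ'inj : Function.Injective γ' := update_inj hγ hfree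
        have hγ'S : ∀ u, γ' u ∈ S := by
          intro u
          rcases eq_or_ne u v with rfl | hu
          · rw [hγ'v]; exact hfS
          · rw [← hγ'ne u hu]; exact hγS u
        -- mismatched set unchanged
        have hM' : Finset.univ.filter (fun u => γ' u ≠ β u) = M := by
          ext u
          simp only [hMdef, Finset.mem_filter, Finset.mem_univ, true_and]
          rcases eq_or_ne u v with rfl | hu
          · rw [hγ'v]
            exact ⟨fun _ => hv, fun _ => fun h => hfβ u h.symm⟩
          · rw [← hγ'ne u hu]
        -- blocked set strictly shrinks
        have hBsub : Finset.univ.filter (fun u => γ' u ≠ β u ∧ ∃ w, γ' w = β u)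
            ⊆ Finset.univ.filter (fun u => γ u ≠ β u ∧ ∃ w, γ w = β u) := by
          intro u hu
          simp only [Finset.mem_filter, Finset.mem_univ, true_and] at hu ⊢
          obtain ⟨hu1, w, hw⟩ := hu
          have hwv : w ≠ v := by
            intro h
            subst h
            rw [hγ'v] at hw
            exact hfβ u hw.symm
          rw [← hγ'ne w hwv] at hw
          refine ⟨?_, w, hw⟩
          rcases eq_or_ne u v with rfl | huv
          · exact hv
          · rwa [← hγ'ne u huv] at hu1
        have hu0B : u0 ∈ Finset.univ.filter (fun u => γ u ≠ β u ∧ ∃ w, γ w = β u) := by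
          simp only [Finset.mem_filter, Finset.mem_univ, true_and]
          have : γ u0 ≠ β u0 := by simpa [hMdef] using hu0M
          exact ⟨this, v, hu0.symm⟩
        have hu0B' : u0 ∉ Finset.univ.filter (fun u => γ' u ≠ β u ∧ ∃ w, γ' w = β u) := by
          simp only [Finset.mem_filter, Finset.mem_univ, true_and, not_and, not_exists]
          intro _ w hw
          rcases eq_or_ne w v with rfl | hwv
          · rw [hγ'v, hu0] at hw
            exact hfree w hw.symm
          · rw [← hγ'ne w hwv, hu0] at hw
            exact hwv (hγ hw)
        have hBlt : (Finset.univ.filter (fun u => γ' u ≠ β u ∧ ∃ w, γ' w = β u)).card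
            < (Finset.univ.filter (fun u => γ u ≠ β u ∧ ∃ w, γ w = β u)).card :=
          Finset.card_lt_card ((Finset.ssubset_iff_of_subset hBsub).mpr ⟨u0, hu0B, hu0B'⟩)
        have hmeas' : (Finset.univ.filter (fun u => γ' u ≠ β u)).card * (k+1)
            + (Finset.univ.filter (fun u => γ' u ≠ β u ∧ ∃ w, γ' w = β u)).card ≤ n := by
          rw [hM']
          rw [hMdef] at hmeas
          generalize M.card * (k+1) = t at hmeas ⊢
          omega
        obtain ⟨m, c, h0, hm, hP, hstep, hcnt⟩ :=
          step_prepend (β := β) hγ hγS (x0 := v) (by rw [hγ'v]; exact fun h => hfree v h)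
            hγ'ne (bnd β γ') (ih γ' hγ'inj hγ'S hmeas')
        refine ⟨m, c, h0, hm, hP, hstep, fun x => le_trans (hcnt x) ?_⟩
        rcases eq_or_ne x v with rfl | hx
        · have e1 : bnd β γ' x = 1 := by
            rw [bnd, hγ'v, if_neg (fun h => hfβ x h.symm),
              if_neg (by push_neg; exact fun y => hfβ y)]
          have e2 : bnd β γ x = 2 := by
            rw [bnd, if_neg hv, if_pos ⟨u0, hu0⟩]
          rw [e1, e2, if_pos rfl]
        · rw [if_neg hx, bnd, bnd, ← hγ'ne x hx]
          omega
      · -- some mismatched vertex has a free target: recolour it to its target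
        push_neg at hblock
        obtain ⟨v, hv, hfree⟩ := hblock
        set γ' := Function.update γ v (β v) with hγ'def
        have hγ'v : γ' v = β v := Function.update_self v (β v) γ
        have hγ'ne : ∀ y, y ≠ v → γ y = γ' y := fun y hy =>
          (Function.update_of_ne hy (β v) γ).symm
        have hγ'inj : Function.Injective γ' := update_inj hγ hfree
        have hγ'S : ∀ u, γ' u ∈ S := by
          intro u
          rcases eq_or_ne u v with rfl | hu
          · rw [hγ'v]; exact hβS' u
          · rw [← hγ'ne u hu]; exact hγS u
        set M := Finset.univ.filter (fun u => γ u ≠ β u) with hMdef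
        have hvM : v ∈ M := by simp [hMdef, hv]
        have hM' : Finset.univ.filter (fun u => γ' u ≠ β u) = M.erase v := by
          ext u
          simp only [hMdef, Finset.mem_filter, Finset.mem_univ, true_and, Finset.mem_erase]
          rcases eq_or_ne u v with rfl | hu
          · rw [hγ'v]; simp
          · rw [← hγ'ne u hu]; simp [hu]
        have hcard : (M.erase v).card + 1 = M.card := Finset.card_erase_add_one hvM
        have hBle : (Finset.univ.filter (fun u => γ' u ≠ β u ∧ ∃ w, γ' w = β u)).card ≤ k := by
          calc (Finset.univ.filter (fun u => γ' u ≠ β u ∧ ∃ w, γ' w = β u)).card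
              ≤ (Finset.univ : Finset (Fin k)).card := Finset.card_filter_le _ _
            _ = k := by rw [Finset.card_univ, Fintype.card_fin]
        have hmeas' : (Finset.univ.filter (fun u => γ' u ≠ β u)).card * (k+1)
            + (Finset.univ.filter (fun u => γ' u ≠ β u ∧ ∃ w, γ' w = β u)).card ≤ n := by
          rw [hM']
          rw [hMdef] at hmeas
          have hexp : M.card * (k+1) = (M.erase v).card * (k+1) + (k+1) := by
            rw [← hcard]; ring
          rw [hexp] at hmeas
          generalize (M.erase v).card * (k+1) = t at hmeas ⊢
          omega
        obtain ⟨m, c, h0, hm, hP, hstep, hcnt⟩ :=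
          step_prepend (β := β) hγ hγS (x0 := v) (by rw [hγ'v]; exact hv)
            hγ'ne (bnd β γ') (ih γ' hγ'inj hγ'S hmeas')
        refine ⟨m, c, h0, hm, hP, hstep, fun x => le_trans (hcnt x) ?_⟩
        rcases eq_or_ne x v with rfl | hx
        · have e1 : bnd β γ' x = 0 := by rw [bnd, if_pos hγ'v]
          have e2 : 1 ≤ bnd β γ x := by rw [bnd, if_neg hv]; split_ifs <;> omega
          rw [e1, if_pos rfl]
          omega
        · rw [if_neg hx, bnd, bnd, ← hγ'ne x hx]
          omega

end Aux

/-- For a set `S` of colours with `|S| > k`, any two injective `S`-colourings of the complete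
graph `K_k` can be transformed into one another by single-vertex recolourings, every
intermediate colouring being injective with colours in `S`, recolouring each vertex at most
twice. -/
theorem stmt6 {C : Type} [DecidableEq C] (k : ℕ) (S : Finset C) (hS : k < S.card)
    (α β : Fin k → C) (hα : Function.Injective α) (hβ : Function.Injective β)
    (hαS : ∀ v, α v ∈ S) (hβS : ∀ v, β v ∈ S) :
    ∃ (m : ℕ) (c : ℕ → Fin k → C),
      c 0 = α ∧ c m = β ∧
      (∀ i ≤ m, Function.Injective (c i) ∧ ∀ v, c i v ∈ S) ∧
      (∀ i < m, ∃! x, c i x ≠ c (i + 1) x) ∧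
      ∀ x, ((Finset.range m).filter (fun i => c i x ≠ c (i + 1) x)).card ≤ 2 := by
  obtain ⟨m, c, h0, hm, hP, hstep, hcnt⟩ :=
    aux hS β hβ hβS ((Finset.univ.filter (fun v => α v ≠ β v)).card * (k+1)
        + (Finset.univ.filter (fun v => α v ≠ β v ∧ ∃ w, α w = β v)).card)
      α hα hαS le_rfl
  exact ⟨m, c, h0, hm, hP, hstep, fun x => le_trans (hcnt x) (bnd_le_two β α x)⟩
end

section
/- A graph G is an OAT graph if and only if every connected component of G is an OAT graph. -/
open SimpleGraph

section Adj
variable {V W : Type} (G : SimpleGraph V) (H : SimpleGraph W)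

@[simp] lemma dUnion_adj_inl_inl (x y : V) :
    (dUnion G H).Adj (Sum.inl x) (Sum.inl y) ↔ G.Adj x y := by
  simp only [dUnion, SimpleGraph.fromRel_adj, ne_eq, Sum.inl.injEq, Sum.inr.injEq]
  aesop (add safe forward SimpleGraph.Adj.symm) (add safe forward SimpleGraph.Adj.ne)

@[simp] lemma dUnion_adj_inr_inr (x y : W) :
    (dUnion G H).Adj (Sum.inr x) (Sum.inr y) ↔ H.Adj x y := by
  simp only [dUnion, SimpleGraph.fromRel_adj, ne_eq, Sum.inl.injEq, Sum.inr.injEq]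
  aesop (add safe forward SimpleGraph.Adj.symm) (add safe forward SimpleGraph.Adj.ne)

@[simp] lemma dUnion_adj_inl_inr (x : V) (y : W) :
    ¬ (dUnion G H).Adj (Sum.inl x) (Sum.inr y) := by
  simp only [dUnion, SimpleGraph.fromRel_adj]; aesop

@[simp] lemma dUnion_adj_inr_inl (x : W) (y : V) :
    ¬ (dUnion G H).Adj (Sum.inr x) (Sum.inl y) := by
  simp only [dUnion, SimpleGraph.fromRel_adj]; aesop

@[simp] lemma joinG_adj_inl_inl (x y : V) :
    (joinG G H).Adj (Sum.inl x) (Sum.inl y) ↔ G.Adj x y := by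
  simp only [joinG, SimpleGraph.fromRel_adj, ne_eq, Sum.inl.injEq, Sum.inr.injEq]
  aesop (add safe forward SimpleGraph.Adj.symm) (add safe forward SimpleGraph.Adj.ne)

@[simp] lemma joinG_adj_inr_inr (x y : W) :
    (joinG G H).Adj (Sum.inr x) (Sum.inr y) ↔ H.Adj x y := by
  simp only [joinG, SimpleGraph.fromRel_adj, ne_eq, Sum.inl.injEq, Sum.inr.injEq]
  aesop (add safe forward SimpleGraph.Adj.symm) (add safe forward SimpleGraph.Adj.ne)

@[simp] lemma joinG_adj_inl_inr (x : V) (y : W) :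
    (joinG G H).Adj (Sum.inl x) (Sum.inr y) := by
  simp only [joinG, SimpleGraph.fromRel_adj]; aesop

@[simp] lemma joinG_adj_inr_inl (x : W) (y : V) :
    (joinG G H).Adj (Sum.inr x) (Sum.inl y) := by
  simp only [joinG, SimpleGraph.fromRel_adj]; aesop

variable (X : Set V) (v : V) (q : ℕ)

@[simp] lemma addComparable_adj_some_some (x y : V) :
    (addComparable G X).Adj (some x) (some y) ↔ G.Adj x y := by
  simp only [addComparable, SimpleGraph.fromRel_adj, ne_eq, Option.some.injEq]
  aesop (add safe forward SimpleGraph.Adj.symm) (add safe forward SimpleGraph.Adj.ne)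

@[simp] lemma addComparable_adj_none_some (x : V) :
    (addComparable G X).Adj none (some x) ↔ x ∈ X := by
  simp only [addComparable, SimpleGraph.fromRel_adj]; aesop

@[simp] lemma addComparable_adj_some_none (x : V) :
    (addComparable G X).Adj (some x) none ↔ x ∈ X := by
  simp only [addComparable, SimpleGraph.fromRel_adj]; aesop

@[simp] lemma addComparable_adj_none_none :
    ¬ (addComparable G X).Adj none none := by
  simp only [addComparable, SimpleGraph.fromRel_adj]; aesop

@[simp] lemma attachClique_adj_inl_inl (x y : V) :
    (attachClique G v q).Adj (Sum.inl x) (Sum.inl y) ↔ G.Adj x y := by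
  simp only [attachClique, SimpleGraph.fromRel_adj, ne_eq, Sum.inl.injEq, Sum.inr.injEq]
  aesop (add safe forward SimpleGraph.Adj.symm) (add safe forward SimpleGraph.Adj.ne)

@[simp] lemma attachClique_adj_inr_inr (i j : Fin q) :
    (attachClique G v q).Adj (Sum.inr i) (Sum.inr j) ↔ i ≠ j := by
  simp only [attachClique, SimpleGraph.fromRel_adj, ne_eq, Sum.inl.injEq, Sum.inr.injEq]
  aesop

@[simp] lemma attachClique_adj_inl_inr (x : V) (i : Fin q) :
    (attachClique G v q).Adj (Sum.inl x) (Sum.inr i) ↔ x = v := by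
  simp only [attachClique, SimpleGraph.fromRel_adj, ne_eq, Sum.inl.injEq, Sum.inr.injEq]
  aesop

@[simp] lemma attachClique_adj_inr_inl (i : Fin q) (y : V) :
    (attachClique G v q).Adj (Sum.inr i) (Sum.inl y) ↔ y = v := by
  simp only [attachClique, SimpleGraph.fromRel_adj, ne_eq, Sum.inl.injEq, Sum.inr.injEq]
  aesop
end Adj

section Mach
variable {V W : Type} {G : SimpleGraph V}

def GClosed (G : SimpleGraph V) (S : Set V) : Prop :=
  ∀ ⦃a b : V⦄, a ∈ S → G.Adj a b → b ∈ S

lemma walk_mem_closed {S : Set V} (hS : GClosed G S) {a b : V}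
    (ha : a ∈ S) (w : G.Walk a b) : b ∈ S := by
  induction w with
  | nil => exact ha
  | cons h p ih => exact ih (hS ha h)

lemma walk_induce_reachable {S : Set V} (hS : GClosed G S) {a b : V}
    (w : G.Walk a b) (ha : a ∈ S) (hb : b ∈ S) :
    (G.induce S).Reachable ⟨a, ha⟩ ⟨b, hb⟩ := by
  induction w with
  | nil => exact Reachable.refl _
  | @cons a c b h p ih =>
      have hc : c ∈ S := hS ha h
      exact (SimpleGraph.Adj.reachable (by exact h :
        (G.induce S).Adj ⟨a, ha⟩ ⟨c, hc⟩)).trans (ih hc hb)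

lemma reachable_induce_iff {S : Set V} (hS : GClosed G S) (a b : ↥S) :
    (G.induce S).Reachable a b ↔ G.Reachable a.1 b.1 := by
  constructor
  · intro h
    have := h.map (SimpleGraph.Embedding.induce S).toHom
    simpa using this
  · rintro ⟨w⟩
    exact walk_induce_reachable hS w a.2 b.2

lemma induce_supp_eq {S : Set V} (hS : GClosed G S) (z : ↥S) :
    ((G.induce S).connectedComponentMk z).supp
      = Subtype.val ⁻¹' ((G.connectedComponentMk z.1).supp) := by
  ext y
  simp only [ConnectedComponent.mem_supp_iff, ConnectedComponent.eq, Set.mem_preimage]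
  exact reachable_induce_iff hS y z

def induceInduce (S T : Set V) (h : T ⊆ S) :
    (G.induce S).induce (Subtype.val ⁻¹' T) ≃g G.induce T where
  toFun a := ⟨a.1.1, a.2⟩
  invFun a := ⟨⟨a.1, h a.2⟩, a.2⟩
  left_inv a := rfl
  right_inv a := rfl
  map_rel_iff' := Iff.rfl

def isoInduce {H : SimpleGraph W} (e : G ≃g H) (S : Set W) :
    G.induce (⇑e ⁻¹' S) ≃g H.induce S where
  toEquiv := e.toEquiv.subtypeEquiv (fun _ => Iff.rfl)
  map_rel_iff' := by
    intro a b
    exact e.map_rel_iff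

def sumSetEquiv (S : Set (V ⊕ W)) :
    (↥(Sum.inl ⁻¹' S) ⊕ ↥(Sum.inr ⁻¹' S)) ≃ ↥S where
  toFun a := match a with
    | Sum.inl x => ⟨Sum.inl x.1, x.2⟩
    | Sum.inr y => ⟨Sum.inr y.1, y.2⟩
  invFun a := match a with
    | ⟨Sum.inl x, h⟩ => Sum.inl ⟨x, h⟩
    | ⟨Sum.inr y, h⟩ => Sum.inr ⟨y, h⟩
  left_inv a := by rcases a with ⟨x, h⟩ | ⟨y, h⟩ <;> rfl
  right_inv a := by rcases a with ⟨x | y, h⟩ <;> rfl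

def sumLeftSetEquiv (S : Set (V ⊕ W)) (h : ∀ y : W, Sum.inr y ∉ S) :
    ↥(Sum.inl ⁻¹' S) ≃ ↥S where
  toFun x := ⟨Sum.inl x.1, x.2⟩
  invFun a := match a with
    | ⟨Sum.inl x, hx⟩ => ⟨x, hx⟩
    | ⟨Sum.inr y, hy⟩ => absurd hy (h y)
  left_inv x := rfl
  right_inv a := by
    rcases a with ⟨x | y, hx⟩
    · rfl
    · exact absurd hx (h y)

def sumRightSetEquiv (S : Set (V ⊕ W)) (h : ∀ x : V, Sum.inl x ∉ S) :
    ↥(Sum.inr ⁻¹' S) ≃ ↥S where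
  toFun x := ⟨Sum.inr x.1, x.2⟩
  invFun a := match a with
    | ⟨Sum.inl x, hx⟩ => absurd hx (h x)
    | ⟨Sum.inr y, hy⟩ => ⟨y, hy⟩
  left_inv x := rfl
  right_inv a := by
    rcases a with ⟨x | y, hx⟩
    · exact absurd hx (h x)
    · rfl

def optionSomeSetEquiv (S : Set (Option V)) (h : none ∉ S) :
    ↥(some ⁻¹' S) ≃ ↥S where
  toFun x := ⟨some x.1, x.2⟩
  invFun a := match a with
    | ⟨none, hx⟩ => absurd hx h
    | ⟨some x, hx⟩ => ⟨x, hx⟩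
  left_inv x := rfl
  right_inv a := by
    rcases a with ⟨_ | x, hx⟩
    · exact absurd hx h
    · rfl

def optionSetEquiv (S : Set (Option V)) (h : none ∈ S) :
    Option ↥(some ⁻¹' S) ≃ ↥S where
  toFun a := match a with
    | none => ⟨none, h⟩
    | some x => ⟨some x.1, x.2⟩
  invFun a := match a with
    | ⟨none, _⟩ => none
    | ⟨some x, hx⟩ => some ⟨x, hx⟩
  left_inv a := by rcases a with _ | ⟨x, hx⟩ <;> rfl
  right_inv a := by rcases a with ⟨_ | x, hx⟩ <;> rfl

def cliqueSetEquiv {q : ℕ} (S : Set (V ⊕ Fin q)) (h : ∀ i, Sum.inr i ∈ S) :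
    (↥(Sum.inl ⁻¹' S) ⊕ Fin q) ≃ ↥S where
  toFun a := match a with
    | Sum.inl x => ⟨Sum.inl x.1, x.2⟩
    | Sum.inr i => ⟨Sum.inr i, h i⟩
  invFun a := match a with
    | ⟨Sum.inl x, hx⟩ => Sum.inl ⟨x, hx⟩
    | ⟨Sum.inr i, _⟩ => Sum.inr i
  left_inv a := by rcases a with ⟨x, hx⟩ | i <;> rfl
  right_inv a := by rcases a with ⟨x | i, hx⟩ <;> rfl
end Mach

lemma isOAT_nonempty {V : Type} {G : SimpleGraph V} (h : IsOAT G) : Nonempty V := by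
  induction h with
  | single => exact ⟨0⟩
  | dunion hG hH ihG ihH => exact ⟨Sum.inl ihG.some⟩
  | join hG hH ihG ihH => exact ⟨Sum.inl ihG.some⟩
  | comparable v X hX hG ih => exact ⟨none⟩
  | clique v q hq hG ih => exact ⟨Sum.inl v⟩
  | iso hG e ih => exact ih.map e

lemma isOAT_induce_closed {V : Type} {G : SimpleGraph V} (h : IsOAT G) :
    ∀ S : Set V, S.Nonempty → GClosed G S → IsOAT (G.induce S) := by
  induction h with
  | single =>
      intro S hne _
      obtain ⟨x, hx⟩ := hne
      haveI : Subsingleton ↥S := ⟨fun a b => Subtype.ext (Subsingleton.elim _ _)⟩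
      refine IsOAT.single.iso
        ⟨equivOfSubsingletonOfSubsingleton (fun _ => ⟨x, hx⟩) (fun _ => 0), ?_⟩
      intro a b
      simp only [SimpleGraph.bot_adj, iff_false, SimpleGraph.comap_adj, not_false_eq_true]
  | @dunion V' W' G H hG hH ihG ihH =>
      intro S hne hcl
      have hcl₁ : GClosed G (Sum.inl ⁻¹' S) := fun x y hx hxy =>
        hcl hx ((dUnion_adj_inl_inl G H x y).mpr hxy)
      have hcl₂ : GClosed H (Sum.inr ⁻¹' S) := fun x y hx hxy =>
        hcl hx ((dUnion_adj_inr_inr G H x y).mpr hxy)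
      by_cases h1 : (Sum.inl ⁻¹' S : Set V').Nonempty <;>
        by_cases h2 : (Sum.inr ⁻¹' S : Set W').Nonempty
      · refine ((ihG _ h1 hcl₁).dunion (ihH _ h2 hcl₂)).iso ⟨sumSetEquiv S, ?_⟩
        rintro (⟨x, hx⟩ | ⟨x, hx⟩) (⟨y, hy⟩ | ⟨y, hy⟩) <;>
          simp [sumSetEquiv, SimpleGraph.comap_adj]
      · have hni : ∀ y : W', Sum.inr y ∉ S := fun y hy => h2 ⟨y, hy⟩
        refine (ihG _ h1 hcl₁).iso ⟨sumLeftSetEquiv S hni, ?_⟩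
        rintro ⟨x, hx⟩ ⟨y, hy⟩
        simp [sumLeftSetEquiv, SimpleGraph.comap_adj]
      · have hni : ∀ x : V', Sum.inl x ∉ S := fun x hx => h1 ⟨x, hx⟩
        refine (ihH _ h2 hcl₂).iso ⟨sumRightSetEquiv S hni, ?_⟩
        rintro ⟨x, hx⟩ ⟨y, hy⟩
        simp [sumRightSetEquiv, SimpleGraph.comap_adj]
      · exfalso
        obtain ⟨a, ha⟩ := hne
        rcases a with x | y
        · exact h1 ⟨x, ha⟩
        · exact h2 ⟨y, ha⟩
  | @join V' W' G H hG hH ihG ihH =>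
      intro S hne hcl
      obtain ⟨v0⟩ := isOAT_nonempty hG
      obtain ⟨w0⟩ := isOAT_nonempty hH
      obtain ⟨a, ha⟩ := hne
      have hl0 : Sum.inl v0 ∈ S := by
        rcases a with x | y
        · exact hcl (hcl ha (joinG_adj_inl_inr G H x w0)) (joinG_adj_inr_inl G H w0 v0)
        · exact hcl ha (joinG_adj_inr_inl G H y v0)
      have hr : ∀ y, Sum.inr y ∈ S := fun y => hcl hl0 (joinG_adj_inl_inr G H v0 y)
      have hl : ∀ x, Sum.inl x ∈ S := fun x => hcl (hr w0) (joinG_adj_inr_inl G H w0 x)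
      have hSuniv : S = Set.univ := by
        ext b
        simp only [Set.mem_univ, iff_true]
        rcases b with x | y
        · exact hl x
        · exact hr y
      subst hSuniv
      exact (IsOAT.join hG hH).iso (SimpleGraph.induceUnivIso _).symm
  | @comparable V' G v X hX hG ih =>
      intro S hne hcl
      have hcl' : GClosed G (some ⁻¹' S) := fun x y hx hxy =>
        hcl hx ((addComparable_adj_some_some G X x y).mpr hxy)
      by_cases hn : none ∈ S
      · by_cases hs : (some ⁻¹' S : Set V').Nonempty
        · have hXS : ∀ x ∈ X, x ∈ (some ⁻¹' S : Set V') := fun x hx =>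
            hcl hn ((addComparable_adj_none_some G X x).mpr hx)
          have hv' : ∃ v' : ↥(some ⁻¹' S),
              {x : ↥(some ⁻¹' S) | ↑x ∈ X} ⊆ (G.induce (some ⁻¹' S)).neighborSet v' := by
            by_cases hXne : X.Nonempty
            · obtain ⟨x0, hx0⟩ := hXne
              have hadj : G.Adj v x0 := hX hx0
              have hvS : v ∈ (some ⁻¹' S : Set V') := hcl' (hXS x0 hx0) hadj.symm
              exact ⟨⟨v, hvS⟩, fun x hx => (hX hx : G.Adj v ↑x)⟩
            · obtain ⟨z, hz⟩ := hs
              exact ⟨⟨z, hz⟩, fun x hx => absurd ⟨↑x, hx⟩ hXne⟩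
          obtain ⟨v', hv'⟩ := hv'
          refine (IsOAT.comparable v' _ hv' (ih _ hs hcl')).iso ⟨optionSetEquiv S hn, ?_⟩
          rintro (_ | ⟨x, hx⟩) (_ | ⟨y, hy⟩) <;>
            simp [optionSetEquiv, SimpleGraph.comap_adj]
        · have hone : ∀ a ∈ S, a = none := by
            rintro (_ | x) ha
            · rfl
            · exact absurd ⟨x, ha⟩ hs
          haveI : Subsingleton ↥S :=
            ⟨fun a b => Subtype.ext ((hone _ a.2).trans (hone _ b.2).symm)⟩
          refine IsOAT.single.iso
            ⟨equivOfSubsingletonOfSubsingleton (fun _ => ⟨none, hn⟩) (fun _ => 0), ?_⟩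
          intro a b
          simp only [SimpleGraph.bot_adj, iff_false, SimpleGraph.comap_adj]
          intro hadj
          exact hadj.ne (congrArg Subtype.val (Subsingleton.elim _ _))
      · have hs : (some ⁻¹' S : Set V').Nonempty := by
          obtain ⟨a, ha⟩ := hne
          rcases a with _ | x
          · exact absurd ha hn
          · exact ⟨x, ha⟩
        refine (ih _ hs hcl').iso ⟨optionSomeSetEquiv S hn, ?_⟩
        rintro ⟨x, hx⟩ ⟨y, hy⟩
        simp [optionSomeSetEquiv, SimpleGraph.comap_adj]
  | @clique V' G v q hq hG ih =>
      intro S hne hcl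
      have hcl₁ : GClosed G (Sum.inl ⁻¹' S) := fun x y hx hxy =>
        hcl hx ((attachClique_adj_inl_inl G v q x y).mpr hxy)
      by_cases hr : ∃ i, Sum.inr i ∈ S
      · obtain ⟨i0, hi0⟩ := hr
        have hv : Sum.inl v ∈ S := hcl hi0 ((attachClique_adj_inr_inl G v q i0 v).mpr rfl)
        have hall : ∀ i, Sum.inr i ∈ S := fun i =>
          hcl hv ((attachClique_adj_inl_inr G v q v i).mpr rfl)
        have hvs : v ∈ (Sum.inl ⁻¹' S : Set V') := hv
        refine (IsOAT.clique ⟨v, hvs⟩ q hq (ih _ ⟨v, hvs⟩ hcl₁)).iso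
          ⟨cliqueSetEquiv S hall, ?_⟩
        rintro (⟨x, hx⟩ | i) (⟨y, hy⟩ | j) <;>
          simp [cliqueSetEquiv, SimpleGraph.comap_adj, Subtype.ext_iff]
      · have hni : ∀ i, Sum.inr i ∉ S := fun i hi => hr ⟨i, hi⟩
        have hs₁ : (Sum.inl ⁻¹' S : Set V').Nonempty := by
          obtain ⟨a, ha⟩ := hne
          rcases a with x | i
          · exact ⟨x, ha⟩
          · exact absurd ha (hni i)
        refine (ih _ hs₁ hcl₁).iso ⟨sumLeftSetEquiv S hni, ?_⟩
        rintro ⟨x, hx⟩ ⟨y, hy⟩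
        simp [sumLeftSetEquiv, SimpleGraph.comap_adj]
  | @iso V' W' G H hG e ih =>
      intro S hne hcl
      have hcl' : GClosed G (⇑e ⁻¹' S) := fun x y hx hxy =>
        hcl hx (e.map_rel_iff.mpr hxy)
      have hne' : (⇑e ⁻¹' S).Nonempty := by
        obtain ⟨a, ha⟩ := hne
        exact ⟨e.symm a, by simpa using ha⟩
      exact (ih _ hne' hcl').iso (isoInduce e S)

lemma isOAT_backward (n : ℕ) : ∀ (V : Type) [Fintype V] [Nonempty V] (G : SimpleGraph V),
    Nat.card V ≤ n → (∀ c : G.ConnectedComponent, IsOAT (G.induce c.supp)) → IsOAT G := by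
  induction n with
  | zero =>
      intro V _ _ G hcard _
      have := Nat.card_pos (α := V)
      omega
  | succ n ih =>
      intro V _ _ G hcard hcomp
      by_cases hconn : ∀ x y : V, G.Reachable x y
      · obtain ⟨x0⟩ := ‹Nonempty V›
        have hsupp : (G.connectedComponentMk x0).supp = Set.univ := by
          ext y
          simpa [ConnectedComponent.mem_supp_iff, ConnectedComponent.eq] using hconn y x0
        have h := hcomp (G.connectedComponentMk x0)
        rw [hsupp] at h
        exact h.iso (SimpleGraph.induceUnivIso G)
      · push_neg at hconn
        obtain ⟨x, y, hxy⟩ := hconn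
        set S := (G.connectedComponentMk x).supp with hSdef
        have hclS : GClosed G S := by
          intro a b ha hab
          simp only [hSdef, ConnectedComponent.mem_supp_iff] at ha ⊢
          rw [← ha]
          exact ConnectedComponent.eq.mpr hab.symm.reachable
        have hclSc : GClosed G Sᶜ := by
          intro a b ha hab hb
          exact ha (hclS hb hab.symm)
        have hxS : x ∈ S := by
          simp [hSdef, ConnectedComponent.mem_supp_iff]
        have hyS : y ∈ Sᶜ := by
          intro hy
          exact hxy ((ConnectedComponent.eq.mp hy).symm)
        haveI : Nonempty ↥Sᶜ := ⟨⟨y, hyS⟩⟩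
        haveI : Nonempty ↥S := ⟨⟨x, hxS⟩⟩
        haveI : Fintype ↥Sᶜ := Fintype.ofFinite _
        have hScard : Nat.card ↥Sᶜ ≤ n := by
          have h1 : Sᶜ.ncard < Nat.card V := by
            rw [← Set.ncard_univ]
            refine Set.ncard_lt_ncard ⟨Set.subset_univ _, fun h => ?_⟩ Set.finite_univ
            exact (h (Set.mem_univ x)) hxS
          rw [Nat.card_coe_set_eq]
          omega
        have hSc : IsOAT (G.induce Sᶜ) := by
          apply ih ↥Sᶜ (G.induce Sᶜ) hScard
          intro d
          obtain ⟨z, hz⟩ := d.exists_rep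
          have hz' : (G.induce Sᶜ).connectedComponentMk z = d := hz
          rw [← hz']
          have hsub : (G.connectedComponentMk z.1).supp ⊆ Sᶜ := by
            intro u hu
            rw [ConnectedComponent.mem_supp_iff] at hu
            obtain ⟨w⟩ := ConnectedComponent.eq.mp hu
            exact walk_mem_closed hclSc z.2 w.reverse
          rw [induce_supp_eq hclSc z]
          exact (hcomp _).iso (induceInduce Sᶜ _ hsub).symm
        have hS : IsOAT (G.induce S) := hcomp _
        classical
        refine (hS.dunion hSc).iso ⟨Equiv.Set.sumCompl S, ?_⟩
        rintro (⟨a, ha⟩ | ⟨a, ha⟩) (⟨b, hb⟩ | ⟨b, hb⟩) <;>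
          simp only [Equiv.Set.sumCompl_apply_inl, Equiv.Set.sumCompl_apply_inr,
            dUnion_adj_inl_inl, dUnion_adj_inr_inr, SimpleGraph.comap_adj,
            iff_false, dUnion_adj_inl_inr, dUnion_adj_inr_inl,
            Function.Embedding.coe_subtype]
        · exact fun h => hb (hclS ha h)
        · exact fun h => ha (hclS hb h.symm)


/-- A graph is an OAT graph iff every connected component of it is an OAT graph. -/
theorem stmt9 {V : Type} [Fintype V] [Nonempty V] (G : SimpleGraph V) :
    IsOAT G ↔ ∀ c : G.ConnectedComponent, IsOAT (G.induce c.supp) := by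
  constructor
  · intro h c
    apply isOAT_induce_closed h
    · obtain ⟨z, hz⟩ := c.exists_rep
      exact ⟨z, by rw [ConnectedComponent.mem_supp_iff]; exact hz⟩
    · intro a b ha hab
      rw [ConnectedComponent.mem_supp_iff] at ha ⊢
      rw [← ha]
      exact ConnectedComponent.eq.mpr hab.symm.reachable
  · intro h
    exact isOAT_backward (Nat.card V) V G le_rfl h
end

section
/- If a graph G has a vertex u that is comparable to some vertex v (u and v non-adjacent with N(u) ⊆ N(v)), then G is an OAT graph if and only if G \ u is an OAT graph. -/
namespace OATProof
open SimpleGraph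

set_option linter.unnecessarySeqFocus false
attribute [local instance] Classical.propDecidable

variable {V W : Type} {G : SimpleGraph V} {H : SimpleGraph W} {X : Set V} {z : V} {q : ℕ}

/-! ### Adjacency lemmas -/

@[simp] lemma dUnion_adj_ll {x y : V} : (dUnion G H).Adj (.inl x) (.inl y) ↔ G.Adj x y := by
  constructor
  · rintro ⟨ne, (⟨a,b,ha,hb,h⟩|⟨a,b,ha,hb,h⟩)|(⟨a,b,ha,hb,h⟩|⟨a,b,ha,hb,h⟩)⟩ <;>
      simp_all <;> exact h.symm
  · intro h; exact ⟨by simp [h.ne], Or.inl (Or.inl ⟨x,y,rfl,rfl,h⟩)⟩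

@[simp] lemma dUnion_adj_rr {x y : W} : (dUnion G H).Adj (.inr x) (.inr y) ↔ H.Adj x y := by
  constructor
  · rintro ⟨ne, (⟨a,b,ha,hb,h⟩|⟨a,b,ha,hb,h⟩)|(⟨a,b,ha,hb,h⟩|⟨a,b,ha,hb,h⟩)⟩ <;>
      simp_all <;> exact h.symm
  · intro h; exact ⟨by simp [h.ne], Or.inl (Or.inr ⟨x,y,rfl,rfl,h⟩)⟩

@[simp] lemma dUnion_adj_lr {x : V} {y : W} : ¬ (dUnion G H).Adj (.inl x) (.inr y) := by
  rintro ⟨ne, (⟨a,b,ha,hb,h⟩|⟨a,b,ha,hb,h⟩)|(⟨a,b,ha,hb,h⟩|⟨a,b,ha,hb,h⟩)⟩ <;> simp_all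

@[simp] lemma dUnion_adj_rl {x : W} {y : V} : ¬ (dUnion G H).Adj (.inr x) (.inl y) := by
  rintro ⟨ne, (⟨a,b,ha,hb,h⟩|⟨a,b,ha,hb,h⟩)|(⟨a,b,ha,hb,h⟩|⟨a,b,ha,hb,h⟩)⟩ <;> simp_all

@[simp] lemma joinG_adj_ll {x y : V} : (joinG G H).Adj (.inl x) (.inl y) ↔ G.Adj x y := by
  constructor
  · rintro ⟨ne, (⟨a,b,ha,hb,h⟩|⟨a,b,ha,hb,h⟩|⟨a,b,ha,hb⟩)|(⟨a,b,ha,hb,h⟩|⟨a,b,ha,hb,h⟩|⟨a,b,ha,hb⟩)⟩ <;>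
      simp_all <;> exact h.symm
  · intro h; exact ⟨by simp [h.ne], Or.inl (Or.inl ⟨x,y,rfl,rfl,h⟩)⟩

@[simp] lemma joinG_adj_rr {x y : W} : (joinG G H).Adj (.inr x) (.inr y) ↔ H.Adj x y := by
  constructor
  · rintro ⟨ne, (⟨a,b,ha,hb,h⟩|⟨a,b,ha,hb,h⟩|⟨a,b,ha,hb⟩)|(⟨a,b,ha,hb,h⟩|⟨a,b,ha,hb,h⟩|⟨a,b,ha,hb⟩)⟩ <;>
      simp_all <;> exact h.symm
  · intro h; exact ⟨by simp [h.ne], Or.inl (Or.inr (Or.inl ⟨x,y,rfl,rfl,h⟩))⟩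

@[simp] lemma joinG_adj_lr {x : V} {y : W} : (joinG G H).Adj (.inl x) (.inr y) :=
  ⟨by simp, Or.inl (Or.inr (Or.inr ⟨x,y,rfl,rfl⟩))⟩

@[simp] lemma joinG_adj_rl {x : W} {y : V} : (joinG G H).Adj (.inr x) (.inl y) :=
  joinG_adj_lr.symm

@[simp] lemma addComparable_adj_ss {x y : V} :
    (addComparable G X).Adj (some x) (some y) ↔ G.Adj x y := by
  constructor
  · rintro ⟨ne, (⟨a,b,ha,hb,h⟩|⟨a,ha,hb,h⟩)|(⟨a,b,ha,hb,h⟩|⟨a,ha,hb,h⟩)⟩ <;>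
      simp_all <;> exact h.symm
  · intro h; exact ⟨by simp [h.ne], Or.inl (Or.inl ⟨x,y,rfl,rfl,h⟩)⟩

@[simp] lemma addComparable_adj_ns {x : V} :
    (addComparable G X).Adj none (some x) ↔ x ∈ X := by
  constructor
  · rintro ⟨ne, (⟨a,b,ha,hb,h⟩|⟨a,ha,hb,h⟩)|(⟨a,b,ha,hb,h⟩|⟨a,ha,hb,h⟩)⟩ <;> simp_all
  · intro h; exact ⟨by simp, Or.inl (Or.inr ⟨x,rfl,rfl,h⟩)⟩

@[simp] lemma addComparable_adj_sn {x : V} :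
    (addComparable G X).Adj (some x) none ↔ x ∈ X := by
  rw [SimpleGraph.adj_comm]; exact addComparable_adj_ns

@[simp] lemma attachClique_adj_ll {x y : V} :
    (attachClique G z q).Adj (.inl x) (.inl y) ↔ G.Adj x y := by
  constructor
  · rintro ⟨ne, (⟨a,b,ha,hb,h⟩|⟨a,b,ha,hb⟩|⟨a,ha,hb⟩)|(⟨a,b,ha,hb,h⟩|⟨a,b,ha,hb⟩|⟨a,ha,hb⟩)⟩ <;>
      simp_all <;> exact h.symm
  · intro h; exact ⟨by simp [h.ne], Or.inl (Or.inl ⟨x,y,rfl,rfl,h⟩)⟩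

@[simp] lemma attachClique_adj_rr {i j : Fin q} :
    (attachClique G z q).Adj (.inr i) (.inr j) ↔ i ≠ j := by
  constructor
  · rintro ⟨ne, _⟩; simp_all
  · intro h; exact ⟨by simp [h], Or.inl (Or.inr (Or.inl ⟨i,j,rfl,rfl⟩))⟩

@[simp] lemma attachClique_adj_lr {x : V} {i : Fin q} :
    (attachClique G z q).Adj (.inl x) (.inr i) ↔ x = z := by
  constructor
  · rintro ⟨ne, (⟨a,b,ha,hb,h⟩|⟨a,b,ha,hb⟩|⟨a,ha,hb⟩)|(⟨a,b,ha,hb,h⟩|⟨a,b,ha,hb⟩|⟨a,ha,hb⟩)⟩ <;>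
      simp_all
  · rintro rfl; exact ⟨by simp, Or.inl (Or.inr (Or.inr ⟨i,rfl,rfl⟩))⟩

@[simp] lemma attachClique_adj_rl {x : V} {i : Fin q} :
    (attachClique G z q).Adj (.inr i) (.inl x) ↔ x = z := by
  rw [SimpleGraph.adj_comm]; exact attachClique_adj_lr

/-! ### Vertex deletion -/

def D {V : Type} (G : SimpleGraph V) (u : V) : SimpleGraph ↥({u}ᶜ : Set V) :=
  G.induce {u}ᶜ

@[simp] lemma D_adj {u : V} {a b : ↥({u}ᶜ : Set V)} : (D G u).Adj a b ↔ G.Adj ↑a ↑b :=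
  Iff.rfl

/-! ### Sum-type equivs and isos -/

def eqSumL (u : V) : ↥({Sum.inl u}ᶜ : Set (V ⊕ W)) ≃ (↥({u}ᶜ : Set V) ⊕ W) where
  toFun a := match a with
    | ⟨.inl x, h⟩ => .inl ⟨x, by simp only [Set.mem_compl_singleton_iff] at h ⊢; simp_all⟩
    | ⟨.inr y, _⟩ => .inr y
  invFun b := match b with
    | .inl x => ⟨.inl x.1, by have := x.2; simp only [Set.mem_compl_singleton_iff] at this ⊢; simp_all⟩
    | .inr y => ⟨.inr y, by simp⟩
  left_inv a := by rcases a with ⟨a|a, h⟩ <;> rfl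
  right_inv b := by rcases b with ⟨x,h⟩|y <;> rfl

def isoDU (G : SimpleGraph V) (H : SimpleGraph W) (u : V) :
    D (dUnion G H) (.inl u) ≃g dUnion (D G u) H where
  toEquiv := eqSumL u
  map_rel_iff' := by
    rintro ⟨a|a, ha⟩ ⟨b|b, hb⟩ <;> simp [eqSumL]

def isoJoin (G : SimpleGraph V) (H : SimpleGraph W) (u : V) :
    D (joinG G H) (.inl u) ≃g joinG (D G u) H where
  toEquiv := eqSumL u
  map_rel_iff' := by
    rintro ⟨a|a, ha⟩ ⟨b|b, hb⟩ <;> simp [eqSumL]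

def swapDU (G : SimpleGraph V) (H : SimpleGraph W) : dUnion G H ≃g dUnion H G where
  toEquiv := Equiv.sumComm V W
  map_rel_iff' := by rintro (a|a) (b|b) <;> simp

def swapJoin (G : SimpleGraph V) (H : SimpleGraph W) : joinG G H ≃g joinG H G where
  toEquiv := Equiv.sumComm V W
  map_rel_iff' := by rintro (a|a) (b|b) <;> simp

def isoSingletonDU (G : SimpleGraph V) (H : SimpleGraph W) (u : V) (hV : ∀ x : V, x = u) :
    D (dUnion G H) (.inl u) ≃g H where
  toEquiv := {
    toFun := fun a => match a with
      | ⟨.inl x, h⟩ => (h (by simp [hV x])).elim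
      | ⟨.inr y, _⟩ => y
    invFun := fun y => ⟨.inr y, by simp⟩
    left_inv := by
      rintro ⟨a|a, h⟩
      · exact (h (by simp [hV a])).elim
      · rfl
    right_inv := fun y => rfl }
  map_rel_iff' := by
    rintro ⟨a|a, ha⟩ ⟨b|b, hb⟩
    · exact (ha (by simp [hV a])).elim
    · exact (ha (by simp [hV a])).elim
    · exact (hb (by simp [hV b])).elim
    · simp

/-! ### Option-type equivs and isos -/

def eqOptNone : ↥({(none : Option V)}ᶜ : Set (Option V)) ≃ V where
  toFun a := match a with
    | ⟨some x, _⟩ => x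
    | ⟨none, h⟩ => (h (by simp)).elim
  invFun y := ⟨some y, by simp⟩
  left_inv a := by
    rcases a with ⟨_|a, h⟩
    · exact (h (by simp)).elim
    · rfl
  right_inv y := rfl

@[simp] lemma eqOptNone_some {x : V} {h} : eqOptNone (⟨some x, h⟩ : ↥({(none : Option V)}ᶜ : Set (Option V))) = x := rfl

def isoAddNone (G : SimpleGraph V) (X : Set V) : D (addComparable G X) none ≃g G where
  toEquiv := eqOptNone
  map_rel_iff' := by
    rintro ⟨_|a, ha⟩ ⟨_|b, hb⟩
    · exact (ha (by simp)).elim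
    · exact (ha (by simp)).elim
    · exact (hb (by simp)).elim
    · simp

def eqOptSome (u : V) : ↥({some u}ᶜ : Set (Option V)) ≃ Option ↥({u}ᶜ : Set V) where
  toFun a := match a with
    | ⟨none, _⟩ => none
    | ⟨some x, h⟩ => some ⟨x, by
        simp only [Set.mem_compl_singleton_iff] at h ⊢; simp_all⟩
  invFun b := match b with
    | none => ⟨none, by simp⟩
    | some x => ⟨some x.1, by
        have := x.2; simp only [Set.mem_compl_singleton_iff] at this ⊢; simp_all⟩
  left_inv a := by rcases a with ⟨_|a, h⟩ <;> rfl
  right_inv b := by rcases b with _|⟨x,h⟩ <;> rfl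

def isoAddSome (G : SimpleGraph V) (X : Set V) (u : V) :
    D (addComparable G X) (some u) ≃g addComparable (D G u) {x | ↑x ∈ X} where
  toEquiv := eqOptSome u
  map_rel_iff' := by
    rintro ⟨_|a, ha⟩ ⟨_|b, hb⟩ <;> simp [eqOptSome]

noncomputable def isoAddTwin (G : SimpleGraph V) (X : Set V) (u : V)
    (h : ∀ x, x ≠ u → (x ∈ X ↔ G.Adj u x)) :
    D (addComparable G X) (some u) ≃g G where
  toEquiv := {
    toFun := fun a => match a with
      | ⟨none, _⟩ => u
      | ⟨some x, _⟩ => x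
    invFun := fun y => if hy : y = u then ⟨none, by simp⟩ else ⟨some y, by simp [hy]⟩
    left_inv := by
      rintro ⟨_|a, ha⟩
      · simp
      · have : a ≠ u := by simpa [Set.mem_compl_singleton_iff] using ha
        simp [this]
    right_inv := fun y => by
      by_cases hy : y = u <;> simp [hy] }
  map_rel_iff' := by
    rintro ⟨_|a, ha⟩ ⟨_|b, hb⟩
    · simp
    · have hb' : b ≠ u := by simpa [Set.mem_compl_singleton_iff] using hb
      simpa using (h b hb').symm
    · have ha' : a ≠ u := by simpa [Set.mem_compl_singleton_iff] using ha
      rw [SimpleGraph.adj_comm]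
      simpa using (h a ha').symm
    · simp

/-! ### Clique isos -/

def isoCliqueL (G : SimpleGraph V) (z : V) (q : ℕ) (u : V) (hz : z ∈ ({u}ᶜ : Set V)) :
    D (attachClique G z q) (.inl u) ≃g attachClique (D G u) ⟨z, hz⟩ q where
  toEquiv := eqSumL u
  map_rel_iff' := by
    rintro ⟨a|a, ha⟩ ⟨b|b, hb⟩ <;> simp [eqSumL, Subtype.ext_iff]

def isoCliqueR1 (G : SimpleGraph V) (z : V) (i : Fin 1) :
    D (attachClique G z 1) (.inr i) ≃g G where
  toEquiv := {
    toFun := fun a => match a with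
      | ⟨.inl x, _⟩ => x
      | ⟨.inr j, h⟩ => (h (by simp [Subsingleton.elim j i])).elim
    invFun := fun y => ⟨.inl y, by simp⟩
    left_inv := by
      rintro ⟨a|a, h⟩
      · rfl
      · exact (h (by simp [Subsingleton.elim a i])).elim
    right_inv := fun y => rfl }
  map_rel_iff' := by
    rintro ⟨a|a, ha⟩ ⟨b|b, hb⟩
    · simp
    · exact (hb (by simp [Subsingleton.elim b i])).elim
    · exact (ha (by simp [Subsingleton.elim a i])).elim
    · exact (ha (by simp [Subsingleton.elim a i])).elim

def eqSumR {W : Type} (u : W) : ↥({Sum.inr u}ᶜ : Set (V ⊕ W)) ≃ (V ⊕ ↥({u}ᶜ : Set W)) where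
  toFun a := match a with
    | ⟨.inl x, _⟩ => .inl x
    | ⟨.inr y, h⟩ => .inr ⟨y, by simp only [Set.mem_compl_singleton_iff] at h ⊢; simp_all⟩
  invFun b := match b with
    | .inl x => ⟨.inl x, by simp⟩
    | .inr y => ⟨.inr y.1, by
        have := y.2; simp only [Set.mem_compl_singleton_iff] at this ⊢; simp_all⟩
  left_inv a := by rcases a with ⟨a|a, h⟩ <;> rfl
  right_inv b := by rcases b with x|⟨y,h⟩ <;> rfl

def isoCliqueR (G : SimpleGraph V) (z : V) (q : ℕ) (i : Fin (q + 1)) :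
    D (attachClique G z (q + 1)) (.inr i) ≃g attachClique G z q where
  toEquiv := (eqSumR i).trans
    (Equiv.sumCongr (Equiv.refl V) (finSuccAboveEquiv i).symm)
  map_rel_iff' := by
    rintro ⟨a|a, ha⟩ ⟨b|b, hb⟩ <;>
      simp [eqSumR, Subtype.ext_iff, Equiv.sumCongr] <;> exact not_congr ((Equiv.apply_eq_iff_eq _).trans Subtype.mk_eq_mk)

noncomputable def isoCliqueZ (G : SimpleGraph V) (z : V) (hz : ∀ x, ¬ G.Adj z x) :
    D (attachClique G z 1) (.inl z) ≃g G where
  toEquiv := {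
    toFun := fun a => match a with
      | ⟨.inl x, _⟩ => x
      | ⟨.inr _, _⟩ => z
    invFun := fun y => if hy : y = z then ⟨.inr 0, by simp⟩ else ⟨.inl y, by simp [hy]⟩
    left_inv := by
      rintro ⟨a|a, ha⟩
      · have : a ≠ z := by simpa [Set.mem_compl_singleton_iff] using ha
        simp [this]
      · simp [Subsingleton.elim (0 : Fin 1) a]
    right_inv := fun y => by by_cases hy : y = z <;> simp [hy] }
  map_rel_iff' := by
    rintro ⟨a|a, ha⟩ ⟨b|b, hb⟩
    · simp
    · have ha' : a ≠ z := by simpa [Set.mem_compl_singleton_iff] using ha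
      simp [ha']
      exact fun h => hz a h.symm
    · have hb' : b ≠ z := by simpa [Set.mem_compl_singleton_iff] using hb
      simp [hb']
      exact fun h => hz b h
    · simp [Subsingleton.elim a b, hz z]

/-! ### Removability and transports -/

def Rem (G : SimpleGraph V) (u : V) : Prop :=
  (∃ v, v ≠ u ∧ ¬ G.Adj u v ∧ G.neighborSet u ⊆ G.neighborSet v) ∨
  (∃ w, G.Adj u w ∧ G.neighborSet u = {w} ∧ G.neighborSet w = {u})

lemma isOAT_of_unique {α : Type} (G : SimpleGraph α) (a : α) (h : ∀ x, x = a) : IsOAT G :=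
  IsOAT.iso IsOAT.single
    { toEquiv :=
        { toFun := fun _ => a
          invFun := fun _ => (0 : Fin 1)
          left_inv := fun i => Subsingleton.elim _ _
          right_inv := fun x => (h x).symm }
      map_rel_iff' := by
        intro i j
        simp only [SimpleGraph.bot_adj, iff_false, Equiv.coe_fn_mk]
        exact fun hadj => G.irrefl hadj }

def D_map {G : SimpleGraph V} {H : SimpleGraph W} (e : G ≃g H) (u : V) :
    D G u ≃g D H (e u) where
  toEquiv := e.toEquiv.subtypeEquiv (fun x => by
    simp only [Set.mem_compl_singleton_iff]
    exact (EmbeddingLike.apply_eq_iff_eq e.toEquiv).symm.not)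
  map_rel_iff' := by
    rintro ⟨a, ha⟩ ⟨b, hb⟩
    simp only [Equiv.subtypeEquiv_apply, D_adj]
    exact e.map_adj_iff

lemma Rem_map {G : SimpleGraph V} {H : SimpleGraph W} (e : G ≃g H) (u : V) :
    Rem G u → Rem H (e u) := by
  have adj_iff : ∀ x y : V, H.Adj (e x) (e y) ↔ G.Adj x y := fun x y => e.map_adj_iff
  rintro (⟨v, hvu, hnadj, hsub⟩ | ⟨w, hadj, hNu, hNw⟩)
  · refine Or.inl ⟨e v, ?_, ?_, ?_⟩
    · exact fun hh => hvu (e.toEquiv.injective hh)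
    · exact fun hh => hnadj ((adj_iff u v).mp hh)
    · intro x hx
      obtain ⟨y, rfl⟩ := e.toEquiv.surjective x
      have : G.Adj u y := (adj_iff u y).mp hx
      exact (adj_iff v y).mpr (hsub this)
  · refine Or.inr ⟨e w, (adj_iff u w).mpr hadj, ?_, ?_⟩
    · ext x
      obtain ⟨y, rfl⟩ := e.toEquiv.surjective x
      constructor
      · intro hx
        have hm : y ∈ G.neighborSet u := (adj_iff u y).mp hx
        rw [hNu] at hm
        exact Set.mem_singleton_iff.mp hm ▸ rfl
      · intro hx
        have hy : y = w := e.toEquiv.injective hx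
        subst hy
        exact (adj_iff u y).mpr hadj
    · ext x
      obtain ⟨y, rfl⟩ := e.toEquiv.surjective x
      constructor
      · intro hx
        have hm : y ∈ G.neighborSet w := (adj_iff w y).mp hx
        rw [hNw] at hm
        exact Set.mem_singleton_iff.mp hm ▸ rfl
      · intro hx
        have hy : y = u := e.toEquiv.injective hx
        subst hy
        exact (adj_iff w y).mpr hadj.symm

noncomputable def isoBack (G : SimpleGraph V) (u : V) :
    addComparable (D G u) {x | G.Adj u ↑x} ≃g G where
  toEquiv := {
    toFun := fun a => match a with
      | none => u
      | some x => ↑x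
    invFun := fun y => if hy : y = u then none else some ⟨y, by simp [hy]⟩
    left_inv := by
      rintro (_|⟨x, hx⟩)
      · simp
      · have : x ≠ u := by simpa [Set.mem_compl_singleton_iff] using hx
        simp [this]
    right_inv := fun y => by by_cases hy : y = u <;> simp [hy] }
  map_rel_iff' := by
    rintro (_|⟨a, ha⟩) (_|⟨b, hb⟩)
    · simp
    · simp
    · rw [SimpleGraph.adj_comm]; simp
    · simp

/-! ### Case lemmas -/

lemma dunion_left {G : SimpleGraph V} {H : SimpleGraph W} (hH : IsOAT H)
    (ihG : ∀ u, Rem G u → IsOAT (D G u)) (u : V)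
    (hrem : Rem (dUnion G H) (.inl u)) : IsOAT (D (dUnion G H) (.inl u)) := by
  rcases hrem with ⟨v, hvu, hnadj, hsub⟩ | ⟨w, hadj, hNu, hNw⟩
  · rcases v with v | v
    · have hGsub : G.neighborSet u ⊆ G.neighborSet v := by
        intro x hx
        have h1 : (Sum.inl x : V ⊕ W) ∈ (dUnion G H).neighborSet (.inl u) := by
          simpa using (hx : G.Adj u x)
        simpa using hsub h1
      have hremG : Rem G u :=
        Or.inl ⟨v, by simpa using hvu, by simpa using hnadj, hGsub⟩
      exact IsOAT.iso (IsOAT.dunion (ihG u hremG) hH) (isoDU G H u).symm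
    · have hiso : ∀ x, ¬ G.Adj u x := by
        intro x hx
        have h1 : (Sum.inl x : V ⊕ W) ∈ (dUnion G H).neighborSet (.inl u) := by
          simpa using hx
        have h2 := hsub h1
        simp only [SimpleGraph.mem_neighborSet] at h2
        exact dUnion_adj_rl h2
      by_cases hsing : ∀ x : V, x = u
      · exact IsOAT.iso hH (isoSingletonDU G H u hsing).symm
      · push_neg at hsing
        obtain ⟨x, hx⟩ := hsing
        have hremG : Rem G u :=
          Or.inl ⟨x, hx, fun h => hiso x h, fun y hy => absurd hy (hiso y)⟩
        exact IsOAT.iso (IsOAT.dunion (ihG u hremG) hH) (isoDU G H u).symm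
  · rcases w with w | w
    · have hGadj : G.Adj u w := by simpa using hadj
      have hNu' : G.neighborSet u = {w} := by
        ext x
        simp only [SimpleGraph.mem_neighborSet, Set.mem_singleton_iff]
        rw [← dUnion_adj_ll (H := H), ← SimpleGraph.mem_neighborSet, hNu]
        simp
      have hNw' : G.neighborSet w = {u} := by
        ext x
        simp only [SimpleGraph.mem_neighborSet, Set.mem_singleton_iff]
        rw [← dUnion_adj_ll (H := H), ← SimpleGraph.mem_neighborSet, hNw]
        simp
      have hremG : Rem G u := Or.inr ⟨w, hGadj, hNu', hNw'⟩
      exact IsOAT.iso (IsOAT.dunion (ihG u hremG) hH) (isoDU G H u).symm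
    · exact absurd hadj dUnion_adj_lr

lemma join_left {G : SimpleGraph V} {H : SimpleGraph W} (hH : IsOAT H)
    (ihG : ∀ u, Rem G u → IsOAT (D G u)) (u : V)
    (hrem : Rem (joinG G H) (.inl u)) : IsOAT (D (joinG G H) (.inl u)) := by
  rcases hrem with ⟨v, hvu, hnadj, hsub⟩ | ⟨w, hadj, hNu, hNw⟩
  · rcases v with v | v
    · have hGsub : G.neighborSet u ⊆ G.neighborSet v := by
        intro x hx
        have h1 : (Sum.inl x : V ⊕ W) ∈ (joinG G H).neighborSet (.inl u) := by
          simpa using (hx : G.Adj u x)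
        simpa using hsub h1
      have hremG : Rem G u :=
        Or.inl ⟨v, by simpa using hvu, by simpa using hnadj, hGsub⟩
      exact IsOAT.iso (IsOAT.join (ihG u hremG) hH) (isoJoin G H u).symm
    · exact absurd joinG_adj_lr hnadj
  · rcases w with w | w
    · have hGadj : G.Adj u w := by simpa using hadj
      have hNu' : G.neighborSet u = {w} := by
        ext x
        simp only [SimpleGraph.mem_neighborSet, Set.mem_singleton_iff]
        rw [← joinG_adj_ll (H := H), ← SimpleGraph.mem_neighborSet, hNu]
        simp
      have hNw' : G.neighborSet w = {u} := by
        ext x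
        simp only [SimpleGraph.mem_neighborSet, Set.mem_singleton_iff]
        rw [← joinG_adj_ll (H := H), ← SimpleGraph.mem_neighborSet, hNw]
        simp
      have hremG : Rem G u := Or.inr ⟨w, hGadj, hNu', hNw'⟩
      exact IsOAT.iso (IsOAT.join (ihG u hremG) hH) (isoJoin G H u).symm
    · -- w = inr j : the whole graph is K2; deleting leaves one vertex
      have hVu : ∀ x : V, x = u := by
        intro x
        have h1 : (Sum.inl x : V ⊕ W) ∈ (joinG G H).neighborSet (.inr w) :=
          joinG_adj_rl
        rw [hNw, Set.mem_singleton_iff] at h1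
        exact Sum.inl.inj h1
      have hWj : ∀ k : W, k = w := by
        intro k
        have h1 : (Sum.inr k : V ⊕ W) ∈ (joinG G H).neighborSet (.inl u) :=
          joinG_adj_lr
        rw [hNu, Set.mem_singleton_iff] at h1
        exact Sum.inr.inj h1
      refine isOAT_of_unique _ ⟨.inr w, by simp⟩ ?_
      rintro ⟨x | x, hx⟩
      · exact (hx (by simp [hVu x])).elim
      · exact Subtype.ext (by simp [hWj x])

lemma addcomp_finish {G : SimpleGraph V} {X : Set V} (u : V)
    (hDu : IsOAT (D G u)) (w₀ : V) (hw : w₀ ≠ u)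
    (hsub : ∀ x : V, x ∈ X → x ≠ u → G.Adj w₀ x) :
    IsOAT (D (addComparable G X) (some u)) := by
  have hmem : w₀ ∈ ({u}ᶜ : Set V) := by simp [hw]
  have hXsub : {x : ↥({u}ᶜ : Set V) | ↑x ∈ X} ⊆ (D G u).neighborSet ⟨w₀, hmem⟩ := by
    rintro ⟨x, hx⟩ hxX
    have hxu : x ≠ u := by simpa [Set.mem_compl_singleton_iff] using hx
    exact hsub x hxX hxu
  exact IsOAT.iso (IsOAT.comparable _ _ hXsub hDu) (isoAddSome G X u).symm

lemma addcomp_case {G : SimpleGraph V} {X : Set V} (z : V) (hX : X ⊆ G.neighborSet z)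
    (hG : IsOAT G) (ih : ∀ u, Rem G u → IsOAT (D G u)) :
    ∀ u, Rem (addComparable G X) u → IsOAT (D (addComparable G X) u) := by
  rintro (_ | u) hrem
  · exact IsOAT.iso hG (isoAddNone G X).symm
  · rcases hrem with ⟨v, hvu, hnadj, hsub⟩ | ⟨w, hadj, hNu, hNw⟩
    · rcases v with _ | v
      · -- v = none
        have hunX : u ∉ X := by simpa using hnadj
        have hGsub : ∀ x, G.Adj u x → x ∈ X := by
          intro x hx
          have h1 : (some x) ∈ (addComparable G X).neighborSet (some u) := by
            simpa using hx
          simpa using hsub h1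
        by_cases hz : z = u
        · subst hz
          refine IsOAT.iso hG (isoAddTwin G X z ?_).symm
          intro x hx
          exact ⟨fun hmem => hX hmem, fun ha => hGsub x ha⟩
        · have hz' : ¬ G.Adj u z := by
            intro hadj'
            have hzz : z ∈ X := hGsub z hadj'
            exact G.irrefl (hX hzz)
          have hremG : Rem G u :=
            Or.inl ⟨z, hz, hz', fun y hy => hX (hGsub y hy)⟩
          exact addcomp_finish u (ih u hremG) z hz (fun x hx _ => hX hx)
      · -- v = some v'
        have hvne : v ≠ u := by simpa using hvu
        have hGn : ¬ G.Adj u v := by simpa using hnadj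
        have hGsub : G.neighborSet u ⊆ G.neighborSet v := by
          intro x hx
          have h1 : (some x) ∈ (addComparable G X).neighborSet (some u) := by
            simpa using (hx : G.Adj u x)
          simpa using hsub h1
        have hremG : Rem G u := Or.inl ⟨v, hvne, hGn, hGsub⟩
        by_cases hz : z = u
        · subst hz
          exact addcomp_finish z (ih z hremG) v hvne
            (fun x hx _ => hGsub (hX hx))
        · exact addcomp_finish u (ih u hremG) z hz (fun x hx _ => hX hx)
    · rcases w with _ | w
      · -- w = none: X = {u}, u isolated in G
        have huX : u ∈ X := by simpa using hadj
        have hNG : ∀ x, ¬ G.Adj u x := by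
          intro x hx
          have h1 : (some x) ∈ (addComparable G X).neighborSet (some u) := by
            simpa using hx
          rw [hNu, Set.mem_singleton_iff] at h1
          exact Option.some_ne_none x h1
        have hXu : ∀ x, x ∈ X → x = u := by
          intro x hx
          have h1 : (some x) ∈ (addComparable G X).neighborSet none := by
            simpa using hx
          rw [hNw, Set.mem_singleton_iff] at h1
          exact Option.some.inj h1
        refine IsOAT.iso hG (isoAddTwin G X u ?_).symm
        intro x hx
        constructor
        · intro hmem; exact absurd (hXu x hmem) hx
        · intro ha; exact absurd ha (hNG x)
      · -- w = some w'
        have hGadj : G.Adj u w := by simpa using hadj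
        have hwu : w ≠ u := hGadj.ne'
        have hNu' : G.neighborSet u = {w} := by
          ext x
          simp only [SimpleGraph.mem_neighborSet, Set.mem_singleton_iff]
          rw [← addComparable_adj_ss (X := X), ← SimpleGraph.mem_neighborSet, hNu]
          simp
        have hNw' : G.neighborSet w = {u} := by
          ext x
          simp only [SimpleGraph.mem_neighborSet, Set.mem_singleton_iff]
          rw [← addComparable_adj_ss (X := X), ← SimpleGraph.mem_neighborSet, hNw]
          simp
        have hwnX : w ∉ X := by
          intro hmem
          have h1 : (none : Option V) ∈ (addComparable G X).neighborSet (some w) := by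
            simpa using hmem
          rw [hNw, Set.mem_singleton_iff] at h1
          exact nomatch h1
        have hremG : Rem G u := Or.inr ⟨w, hGadj, hNu', hNw'⟩
        by_cases hz : z = u
        · subst hz
          refine addcomp_finish z (ih z hremG) w hwu ?_
          intro x hx _
          have hxz : x ∈ G.neighborSet z := hX hx
          rw [hNu', Set.mem_singleton_iff] at hxz
          exact absurd (hxz ▸ hx) hwnX
        · exact addcomp_finish u (ih u hremG) z hz (fun x hx _ => hX hx)

lemma clique_finish {G : SimpleGraph V} {z : V} {q : ℕ} (hq : 1 ≤ q) (u : V)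
    (hDu : IsOAT (D G u)) (hz : z ≠ u) :
    IsOAT (D (attachClique G z q) (.inl u)) := by
  have hmem : z ∈ ({u}ᶜ : Set V) := by simp [hz]
  exact IsOAT.iso (IsOAT.clique ⟨z, hmem⟩ q hq hDu) (isoCliqueL G z q u hmem).symm

lemma clique_case {G : SimpleGraph V} (z : V) (q : ℕ) (hq : 1 ≤ q)
    (hG : IsOAT G) (ih : ∀ u, Rem G u → IsOAT (D G u)) :
    ∀ u, Rem (attachClique G z q) u → IsOAT (D (attachClique G z q) u) := by
  rintro (u | i) hrem
  · by_cases huz : u = z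
    · subst huz
      rcases hrem with ⟨v, hvne, hnadj, hsub⟩ | ⟨w, hadj, hNu, hNw⟩
      · -- comparable partner of the attachment vertex: impossible
        obtain ⟨i0, hi0⟩ : ∃ i : Fin q, True := ⟨⟨0, hq⟩, trivial⟩
        have hadj0 : (Sum.inr i0) ∈ (attachClique G u q).neighborSet (.inl u) := by
          simp [SimpleGraph.mem_neighborSet]
        have h1 := hsub hadj0
        rcases v with v | j
        · have : v = u := by simpa [SimpleGraph.mem_neighborSet] using h1
          exact absurd (congrArg Sum.inl this) hvne
        · exact absurd (by simp : (attachClique G u q).Adj (.inl u) (.inr j)) hnadj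
      · -- K2 case: q = 1 and the attachment vertex is isolated in G
        have hw0 : ∀ i : Fin q, Sum.inr i = w := by
          intro i
          have h1 : (Sum.inr i) ∈ (attachClique G u q).neighborSet (.inl u) := by
            simp [SimpleGraph.mem_neighborSet]
          rw [hNu, Set.mem_singleton_iff] at h1
          exact h1
        obtain ⟨q', rfl⟩ : ∃ n, q = n + 1 := ⟨q - 1, by omega⟩
        rcases q' with _ | m
        · -- q = 1
          have hNz : ∀ x, ¬ G.Adj u x := by
            intro x hx
            have h1 : (Sum.inl x : V ⊕ Fin 1) ∈
                (attachClique G u 1).neighborSet (.inl u) := by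
              simpa [SimpleGraph.mem_neighborSet] using hx
            rw [hNu, Set.mem_singleton_iff, ← hw0 0] at h1
            exact nomatch h1
          exact IsOAT.iso hG (isoCliqueZ G u hNz).symm
        · -- q ≥ 2 : contradiction
          have h01 : (0 : Fin (m + 2)) = 1 :=
            Sum.inr.inj ((hw0 0).trans (hw0 1).symm)
          simp at h01
    · -- u ≠ z
      rcases hrem with ⟨v, hvne, hnadj, hsub⟩ | ⟨w, hadj, hNu, hNw⟩
      · rcases v with v | j
        · have hvne' : v ≠ u := by simpa using hvne
          have hGn : ¬ G.Adj u v := by simpa using hnadj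
          have hGsub : G.neighborSet u ⊆ G.neighborSet v := by
            intro x hx
            have h1 : (Sum.inl x : V ⊕ Fin q) ∈
                (attachClique G z q).neighborSet (.inl u) := by
              simpa using (hx : G.Adj u x)
            simpa using hsub h1
          exact clique_finish hq u (ih u (Or.inl ⟨v, hvne', hGn, hGsub⟩)) (Ne.symm huz)
        · -- partner is a clique vertex: N_G(u) ⊆ {z}
          have hsubz : ∀ x, G.Adj u x → x = z := by
            intro x hx
            have h1 : (Sum.inl x : V ⊕ Fin q) ∈
                (attachClique G z q).neighborSet (.inl u) := by simpa using hx
            simpa using hsub h1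
          by_cases hz2 : G.Adj u z
          · by_cases hex : ∃ x, x ≠ u ∧ G.Adj z x
            · obtain ⟨x, hxu, hzx⟩ := hex
              have hxz : x ≠ z := hzx.ne'
              have hremG : Rem G u := Or.inl ⟨x, hxu,
                fun h => hxz (hsubz x h),
                fun y hy => by
                  have hyz : y = z := hsubz y hy
                  subst hyz
                  exact hzx.symm⟩
              exact clique_finish hq u (ih u hremG) (Ne.symm huz)
            · push_neg at hex
              have hNu' : G.neighborSet u = {z} := by
                ext y
                simp only [SimpleGraph.mem_neighborSet, Set.mem_singleton_iff]
                exact ⟨fun h => hsubz y h, fun h => h ▸ hz2⟩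
              have hNz' : G.neighborSet z = {u} := by
                ext y
                simp only [SimpleGraph.mem_neighborSet, Set.mem_singleton_iff]
                constructor
                · intro h
                  by_contra hyu
                  exact hex y hyu h
                · intro h; exact h ▸ hz2.symm
              exact clique_finish hq u (ih u (Or.inr ⟨z, hz2, hNu', hNz'⟩)) (Ne.symm huz)
          · have hremG : Rem G u := Or.inl ⟨z, (Ne.symm huz),
              hz2, fun y hy => absurd ((hsubz y hy) ▸ hy) hz2⟩
            exact clique_finish hq u (ih u hremG) (Ne.symm huz)
      · rcases w with w | j
        · have hGadj : G.Adj u w := by simpa using hadj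
          have hNu' : G.neighborSet u = {w} := by
            ext x
            simp only [SimpleGraph.mem_neighborSet, Set.mem_singleton_iff]
            rw [← attachClique_adj_ll (z := z) (q := q), ← SimpleGraph.mem_neighborSet, hNu]
            simp
          have hNw' : G.neighborSet w = {u} := by
            ext x
            simp only [SimpleGraph.mem_neighborSet, Set.mem_singleton_iff]
            rw [← attachClique_adj_ll (z := z) (q := q), ← SimpleGraph.mem_neighborSet, hNw]
            simp
          exact clique_finish hq u (ih u (Or.inr ⟨w, hGadj, hNu', hNw'⟩)) (Ne.symm huz)
        · have : u = z := by simpa using hadj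
          exact absurd this huz
  · -- deleting a clique vertex
    obtain ⟨q', rfl⟩ : ∃ n, q = n + 1 := ⟨q - 1, by omega⟩
    rcases q' with _ | m
    · exact IsOAT.iso hG (isoCliqueR1 G z i).symm
    · exact IsOAT.iso (IsOAT.clique z (m + 1) (by omega) hG)
        (isoCliqueR G z (m + 1) i).symm

theorem main_del {V : Type} {G : SimpleGraph V} (h : IsOAT G) :
    ∀ u, Rem G u → IsOAT (D G u) := by
  induction h with
  | single =>
      rintro u (⟨v, hvu, _, _⟩ | ⟨w, hw, _, _⟩)
      · exact absurd (Subsingleton.elim v u) hvu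
      · simp at hw
  | @dunion V W G H hG hH ihG ihH =>
      rintro (u | u) hrem
      · exact dunion_left hH ihG u hrem
      · have h1 : Rem (dUnion H G) (.inl u) := Rem_map (swapDU G H) (.inr u) hrem
        have h2 := dunion_left hG ihH u h1
        exact IsOAT.iso h2
          ((D_map (swapDU G H) (.inr u) :
            D (dUnion G H) (.inr u) ≃g D (dUnion H G) (.inl u))).symm
  | @join V W G H hG hH ihG ihH =>
      rintro (u | u) hrem
      · exact join_left hH ihG u hrem
      · have h1 : Rem (joinG H G) (.inl u) := Rem_map (swapJoin G H) (.inr u) hrem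
        have h2 := join_left hG ihH u h1
        exact IsOAT.iso h2
          ((D_map (swapJoin G H) (.inr u) :
            D (joinG G H) (.inr u) ≃g D (joinG H G) (.inl u))).symm
  | comparable z X hX hG ih => exact addcomp_case z hX hG ih
  | clique z q hq hG ih => exact clique_case z q hq hG ih
  | @iso V W G H hG e ih =>
      intro u hrem
      have h1 : Rem G (e.symm u) := Rem_map e.symm u hrem
      exact IsOAT.iso (ih _ h1)
        ((D_map e.symm u : D H u ≃g D G (e.symm u))).symm

end OATProof

/-- If `u` is comparable to `v` in `G` (non-adjacent, `N(u) ⊆ N(v)`), then `G` is OAT iff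
`G \ u` is OAT. -/
theorem stmt11 {V : Type} [Fintype V] (G : SimpleGraph V) (u v : V) (huv : u ≠ v)
    (hadj : ¬ G.Adj u v) (hsub : G.neighborSet u ⊆ G.neighborSet v) :
    IsOAT G ↔ IsOAT (G.induce {u}ᶜ) := by
  constructor
  · intro h
    have hrem : OATProof.Rem G u := Or.inl ⟨v, Ne.symm huv, hadj, hsub⟩
    exact OATProof.main_del h u hrem
  · intro h
    have hvm : v ∈ ({u}ᶜ : Set V) := by simp [Ne.symm huv]
    have hXsub : {x : ↥({u}ᶜ : Set V) | G.Adj u ↑x} ⊆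
        (OATProof.D G u).neighborSet ⟨v, hvm⟩ := by
      rintro ⟨x, hx⟩ hxmem
      exact hsub hxmem
    exact IsOAT.iso (IsOAT.comparable _ _ hXsub h) (OATProof.isoBack G u)
end

section
/- Every graph that can be obtained from some graph H with at least one vertex by attaching a complete graph on at least 4 vertices to a vertex of H, where H itself is a complete graph on at least 4 vertices, is an OAT graph but is not a compact graph. -/
/-- A walk is a chordless path if it is a path and the only adjacencies among its vertices are
between consecutive vertices of the walk. -/
def IsChordlessPath {V : Type} {G : SimpleGraph V} {u v : V} (w : G.Walk u v) : Prop :=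
  w.IsPath ∧ ∀ i j : Fin w.support.length,
    G.Adj (w.support.get i) (w.support.get j) → (i.val + 1 = j.val ∨ j.val + 1 = i.val)

/-- A 2-pair: two distinct non-adjacent vertices such that every chordless path between them
has exactly two edges. -/
def IsTwoPair {V : Type} (G : SimpleGraph V) (x y : V) : Prop :=
  x ≠ y ∧ ¬ G.Adj x y ∧ ∀ w : G.Walk x y, IsChordlessPath w → w.length = 2

/-- `G` contains a hole: an induced cycle on at least 5 vertices. -/
def HasHole {V : Type} (G : SimpleGraph V) : Prop :=
  ∃ n, 5 ≤ n ∧ ∃ f : Fin n → V, Function.Injective f ∧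
    ∀ i j : Fin n, G.Adj (f i) (f j) ↔ (i ≠ j ∧ ((i.val + 1) % n = j.val ∨ (j.val + 1) % n = i.val))

/-- `G` is weakly chordal: neither `G` nor its complement contains a hole. -/
def WeaklyChordal {V : Type} (G : SimpleGraph V) : Prop :=
  ¬ HasHole G ∧ ¬ HasHole Gᶜ

/-- For a 2-pair `{x,y}` of `H`, `S(x,y) = N(x) ∩ N(y)`. -/
def twoPairSep {V : Type} (H : SimpleGraph V) (x y : V) : Set V :=
  H.neighborSet x ∩ H.neighborSet y

/-- For a 2-pair `{x,y}` of `H`, `C_x` is (the vertex set of) the connected component of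
`H \ S(x,y)` containing `x`. -/
def twoPairComp {V : Type} (H : SimpleGraph V) (x y : V) : Set V :=
  {z | ∃ (hx : x ∈ (twoPairSep H x y)ᶜ) (hz : z ∈ (twoPairSep H x y)ᶜ),
    (H.induce (twoPairSep H x y)ᶜ).Reachable ⟨x, hx⟩ ⟨z, hz⟩}

/-- A weakly chordal graph `G` is compact if every induced subgraph `H` either is complete,
or contains a 2-pair `{x,y}` with `N_H(x) ⊆ N_H(y)`, or contains a 2-pair `{x,y}` such that
`C_x ∪ S(x,y)` induces a clique on at most three vertices in `H`. -/
def IsCompactGraph {V : Type} (G : SimpleGraph V) : Prop :=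
  WeaklyChordal G ∧ ∀ s : Set V,
    (G.induce s).IsClique Set.univ ∨
    (∃ x y : s, IsTwoPair (G.induce s) x y ∧
      (G.induce s).neighborSet x ⊆ (G.induce s).neighborSet y) ∨
    (∃ x y : s, IsTwoPair (G.induce s) x y ∧
      (G.induce s).IsClique (twoPairComp (G.induce s) x y ∪ twoPairSep (G.induce s) x y) ∧
      (twoPairComp (G.induce s) x y ∪ twoPairSep (G.induce s) x y).ncard ≤ 3)


section Aux

variable {p q : ℕ} {v : Fin p}

lemma adj_ll (x y : Fin p) :
    (attachClique (⊤ : SimpleGraph (Fin p)) v q).Adj (Sum.inl x) (Sum.inl y) ↔ x ≠ y := by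
  simp [attachClique, SimpleGraph.fromRel_adj]
  tauto

lemma adj_rr (i j : Fin q) :
    (attachClique (⊤ : SimpleGraph (Fin p)) v q).Adj (Sum.inr i) (Sum.inr j) ↔ i ≠ j := by
  simp [attachClique, SimpleGraph.fromRel_adj]

lemma adj_lr (x : Fin p) (i : Fin q) :
    (attachClique (⊤ : SimpleGraph (Fin p)) v q).Adj (Sum.inl x) (Sum.inr i) ↔ x = v := by
  simp [attachClique, SimpleGraph.fromRel_adj]

lemma adj_rl (x : Fin p) (i : Fin q) :
    (attachClique (⊤ : SimpleGraph (Fin p)) v q).Adj (Sum.inr i) (Sum.inl x) ↔ x = v := by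
  simp [attachClique, SimpleGraph.fromRel_adj]

lemma attach_bot_adj (n : ℕ) (a b : Fin 1 ⊕ Fin n) :
    (attachClique (⊥ : SimpleGraph (Fin 1)) 0 n).Adj a b ↔ a ≠ b := by
  constructor
  · exact fun h => h.ne
  · intro h
    rcases a with x | i <;> rcases b with y | j
    · exact absurd (by rw [Subsingleton.elim x y]) h
    · have hx : x = 0 := Subsingleton.elim x 0
      subst hx
      simp [attachClique, SimpleGraph.fromRel_adj, h]
    · have hy : y = 0 := Subsingleton.elim y 0
      subst hy
      simp [attachClique, SimpleGraph.fromRel_adj, h]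
    · simp [attachClique, SimpleGraph.fromRel_adj, h]

lemma oat_top (p : ℕ) (hp : 1 ≤ p) : IsOAT (⊤ : SimpleGraph (Fin p)) := by
  rcases Nat.lt_or_ge p 2 with h2 | h2
  · have hp1 : p = 1 := by omega
    subst hp1
    have : (⊥ : SimpleGraph (Fin 1)) = ⊤ := by
      ext a b
      simp [Subsingleton.elim a b]
    rw [← this]; exact IsOAT.single
  · have h1 := IsOAT.clique (G := (⊥ : SimpleGraph (Fin 1))) (0 : Fin 1) (p - 1)
      (by omega) IsOAT.single
    refine IsOAT.iso h1 ?_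
    refine ⟨(finSumFinEquiv).trans (finCongr (by omega)), ?_⟩
    intro a b
    simp only [SimpleGraph.top_adj, attach_bot_adj]
    constructor
    · intro h hab; exact h (by rw [hab])
    · intro h hab
      exact h ((Equiv.injective _) hab)

lemma nonadj_shape (a b : Fin p ⊕ Fin q) (hne : a ≠ b)
    (hnadj : ¬ (attachClique (⊤ : SimpleGraph (Fin p)) v q).Adj a b) :
    ∃ u i, u ≠ v ∧ ((a = Sum.inl u ∧ b = Sum.inr i) ∨ (a = Sum.inr i ∧ b = Sum.inl u)) := by
  rcases a with x | i <;> rcases b with y | j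
  · exact absurd ((adj_ll x y).mpr (fun h => hne (by rw [h]))) hnadj
  · refine ⟨x, j, ?_, Or.inl ⟨rfl, rfl⟩⟩
    intro h; exact hnadj ((adj_lr x j).mpr h)
  · refine ⟨y, i, ?_, Or.inr ⟨rfl, rfl⟩⟩
    intro h; exact hnadj ((adj_rl y i).mpr h)
  · exact absurd ((adj_rr i j).mpr (fun h => hne (by rw [h]))) hnadj

lemma exists_third (p : ℕ) (hp : 4 ≤ p) (u v : Fin p) : ∃ w : Fin p, w ≠ u ∧ w ≠ v := by
  by_contra h
  push_neg at h
  have h0 := h ⟨0, by omega⟩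
  have h1 := h ⟨1, by omega⟩
  have h2 := h ⟨2, by omega⟩
  rcases Classical.em ((⟨0, by omega⟩ : Fin p) = u) with e0 | e0
  · rcases Classical.em ((⟨1, by omega⟩ : Fin p) = u) with e1 | e1
    · rw [← e0] at e1; simp [Fin.ext_iff] at e1
    · have hv1 := h1 e1
      rcases Classical.em ((⟨2, by omega⟩ : Fin p) = u) with e2 | e2
      · rw [← e0] at e2; simp [Fin.ext_iff] at e2
      · have hv2 := h2 e2
        rw [← hv1] at hv2; simp [Fin.ext_iff] at hv2
  · have hv0 := h0 e0
    rcases Classical.em ((⟨1, by omega⟩ : Fin p) = u) with e1 | e1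
    · rcases Classical.em ((⟨2, by omega⟩ : Fin p) = u) with e2 | e2
      · rw [← e1] at e2; simp [Fin.ext_iff] at e2
      · have hv2 := h2 e2
        rw [← hv0] at hv2; simp [Fin.ext_iff] at hv2
    · have hv1 := h1 e1
      rw [← hv0] at hv1; simp [Fin.ext_iff] at hv1

end Aux

/-- Attaching a complete graph on at least 4 vertices to a vertex of a complete graph on at
least 4 vertices yields an OAT graph that is not compact. -/
theorem stmt19 (p q : ℕ) (hp : 4 ≤ p) (hq : 4 ≤ q) (v : Fin p) :
    IsOAT (attachClique (⊤ : SimpleGraph (Fin p)) v q) ∧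
    ¬ IsCompactGraph (attachClique (⊤ : SimpleGraph (Fin p)) v q) := by
  set G := attachClique (⊤ : SimpleGraph (Fin p)) v q with hG
  constructor
  · exact IsOAT.clique v q (by omega) (oat_top p (by omega))
  · rintro ⟨-, h⟩
    rcases h Set.univ with hcl | ⟨x, y, ⟨hne, hnadj, -⟩, hsub⟩ | ⟨x, y, ⟨hne, hnadj, -⟩, -, hcard⟩
    · -- not a clique
      obtain ⟨u, hu⟩ : ∃ u : Fin p, u ≠ v := by
        rcases Classical.em ((⟨0, by omega⟩ : Fin p) = v) with e | e
        · exact ⟨⟨1, by omega⟩, by rw [← e]; simp [Fin.ext_iff]⟩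
        · exact ⟨_, e⟩
      have hadj := hcl (Set.mem_univ (⟨Sum.inl u, trivial⟩ : (Set.univ : Set (Fin p ⊕ Fin q))))
        (Set.mem_univ (⟨Sum.inr ⟨0, by omega⟩, trivial⟩ : (Set.univ : Set (Fin p ⊕ Fin q))))
        (by intro hcc; simpa using congrArg Subtype.val hcc)
      have : G.Adj (Sum.inl u) (Sum.inr ⟨0, by omega⟩) := hadj
      exact hu ((adj_lr u _).mp this)
    · -- neighborhood containment fails
      have hne' : x.val ≠ y.val := fun h => hne (Subtype.ext h)
      have hnadj' : ¬ G.Adj x.val y.val := hnadj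
      obtain ⟨u, i, huv, hcase⟩ := nonadj_shape x.val y.val hne' hnadj'
      rcases hcase with ⟨hx1, hy1⟩ | ⟨hx1, hy1⟩
      · obtain ⟨w, hwu, hwv⟩ := exists_third p hp u v
        have hmem : (⟨Sum.inl w, trivial⟩ : (Set.univ : Set (Fin p ⊕ Fin q))) ∈
            (G.induce Set.univ).neighborSet x := by
          show G.Adj x.val (Sum.inl w)
          rw [hx1]; exact (adj_ll u w).mpr (fun h => hwu h.symm)
        have h2 : G.Adj y.val (Sum.inl w) := hsub hmem
        rw [hy1] at h2
        exact hwv ((adj_rl w i).mp h2)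
      · obtain ⟨j, hji⟩ : ∃ j : Fin q, j ≠ i := by
          rcases Classical.em ((⟨0, by omega⟩ : Fin q) = i) with e | e
          · exact ⟨⟨1, by omega⟩, by rw [← e]; simp [Fin.ext_iff]⟩
          · exact ⟨_, e⟩
        have hmem : (⟨Sum.inr j, trivial⟩ : (Set.univ : Set (Fin p ⊕ Fin q))) ∈
            (G.induce Set.univ).neighborSet x := by
          show G.Adj x.val (Sum.inr j)
          rw [hx1]; exact (adj_rr i j).mpr (fun h => hji h.symm)
        have h2 : G.Adj y.val (Sum.inr j) := hsub hmem
        rw [hy1] at h2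
        exact huv ((adj_lr u j).mp h2)
    · -- the component+separator set is too big
      set H' := G.induce (Set.univ : Set (Fin p ⊕ Fin q)) with hH'
      have hne' : x.val ≠ y.val := fun h => hne (Subtype.ext h)
      obtain ⟨u, i, huv, hcase⟩ := nonadj_shape x.val y.val hne' hnadj
      have hxmem : x ∈ (twoPairSep H' x y)ᶜ := by
        intro hmem
        exact H'.irrefl hmem.1
      rcases hcase with ⟨hx1, hy1⟩ | ⟨hx1, hy1⟩
      · -- x on the Fin p side : all of inl '' univ is inside comp ∪ sep
        set f : Fin p → (Set.univ : Set (Fin p ⊕ Fin q)) := fun w => ⟨Sum.inl w, trivial⟩ with hf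
        have hfinj : Function.Injective f := by
          intro a b hab
          have := congrArg Subtype.val hab
          simpa [hf] using this
        have hsub2 : Set.range f ⊆ twoPairComp H' x y ∪ twoPairSep H' x y := by
          rintro z ⟨w, rfl⟩
          by_cases hwv : w = v
          · right
            constructor
            · show G.Adj x.val (Sum.inl w)
              rw [hx1]; exact (adj_ll u w).mpr (by rw [hwv]; exact huv)
            · show G.Adj y.val (Sum.inl w)
              rw [hy1]; exact (adj_rl w i).mpr hwv
          · left
            have hzmem : f w ∈ (twoPairSep H' x y)ᶜ := by
              intro hmem
              have h2 : G.Adj y.val (Sum.inl w) := hmem.2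
              rw [hy1] at h2
              exact hwv ((adj_rl w i).mp h2)
            refine ⟨hxmem, hzmem, ?_⟩
            by_cases hxw : x = f w
            · have : (⟨x, hxmem⟩ : ((twoPairSep H' x y)ᶜ : Set _)) = ⟨f w, hzmem⟩ :=
                Subtype.ext hxw
              rw [this]
            · apply SimpleGraph.Adj.reachable
              show G.Adj x.val (Sum.inl w)
              rw [hx1]
              refine (adj_ll u w).mpr ?_
              intro h
              exact hxw (Subtype.ext (by rw [hx1, h]))
        have h1 : (Set.range f).ncard = p := by
          rw [← Nat.card_coe_set_eq, Nat.card_range_of_injective hfinj,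
            Nat.card_eq_fintype_card, Fintype.card_fin]
        have h2 := Set.ncard_le_ncard hsub2 (Set.toFinite _)
        omega
      · -- x on the Fin q side : all of inr '' univ is inside comp
        set f : Fin q → (Set.univ : Set (Fin p ⊕ Fin q)) := fun j => ⟨Sum.inr j, trivial⟩ with hf
        have hfinj : Function.Injective f := by
          intro a b hab
          have := congrArg Subtype.val hab
          simpa [hf] using this
        have hsub2 : Set.range f ⊆ twoPairComp H' x y ∪ twoPairSep H' x y := by
          rintro z ⟨j, rfl⟩
          left
          have hzmem : f j ∈ (twoPairSep H' x y)ᶜ := by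
            intro hmem
            have h2 : G.Adj y.val (Sum.inr j) := hmem.2
            rw [hy1] at h2
            exact huv ((adj_lr u j).mp h2)
          refine ⟨hxmem, hzmem, ?_⟩
          by_cases hxj : x = f j
          · have : (⟨x, hxmem⟩ : ((twoPairSep H' x y)ᶜ : Set _)) = ⟨f j, hzmem⟩ :=
              Subtype.ext hxj
            rw [this]
          · apply SimpleGraph.Adj.reachable
            show G.Adj x.val (Sum.inr j)
            rw [hx1]
            refine (adj_rr i j).mpr ?_
            intro h
            exact hxj (Subtype.ext (by rw [hx1, h]))
        have h1 : (Set.range f).ncard = q := by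
          rw [← Nat.card_coe_set_eq, Nat.card_range_of_injective hfinj,
            Nat.card_eq_fintype_card, Fintype.card_fin]
        have h2 := Set.ncard_le_ncard hsub2 (Set.toFinite _)
        omega
end
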